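/- arXiv:2205.02196 — 8 statements merged into one kernel-verified Lean document; each statement's English description precedes it below -/
import Mathlib

section
/- For n ≥ 3, a partial transformation α on {1,...,n} is a partial isometry of the cycle graph C_n if and only if α is a restriction of some element of the dihedral group D_{2n} generated by the n-cycle g (i·g = i+1 mod n) and the reversal h (i·h = n-i+1). -/
/-- Geodesic distance on the cycle graph `C_n` with vertices `{1,...,n}`:
`d(x,y) = min (|x-y|, n-|x-y|)`. -/
def cdist (n x y : ℕ) : ℕ := min ((x : ℤ) - y).natAbs (n - ((x : ℤ) - y).natAbs)

/-- The n-cycle permutation `g` of `{1,...,n}`: `i ↦ i+1 (mod n)`. -/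
def gfun (n i : ℕ) : ℕ := if i < n then i + 1 else 1

/-- The reversal permutation `h` of `{1,...,n}`: `i ↦ n-i+1`. -/
def hfun (n i : ℕ) : ℕ := n - i + 1

/-- Left-to-right composition of partial maps (apply `f`, then `g`). -/
def pcomp (f g : ℕ → Option ℕ) : ℕ → Option ℕ := fun x => (f x).bind g

/-- The partial identity on `{1,...,n}`. -/
def pid (n : ℕ) : ℕ → Option ℕ := fun i => if i ∈ Finset.Icc 1 n then some i else none

/-- `g` as a partial map with domain `{1,...,n}`. -/
def gmap (n : ℕ) : ℕ → Option ℕ := fun i => if i ∈ Finset.Icc 1 n then some (gfun n i) else none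

/-- `h` as a partial map with domain `{1,...,n}`. -/
def hmap (n : ℕ) : ℕ → Option ℕ := fun i => if i ∈ Finset.Icc 1 n then some (hfun n i) else none

/-- `e_j`: the partial identity with domain `{1,...,n} \ {j}`. -/
def emap (n j : ℕ) : ℕ → Option ℕ := fun i => if i ∈ Finset.Icc 1 n ∧ i ≠ j then some i else none

/-- `k`-th power of a partial map (with identity `pid n`). -/
def ppow (n : ℕ) (f : ℕ → Option ℕ) : ℕ → (ℕ → Option ℕ)
  | 0 => pid n
  | k + 1 => pcomp f (ppow n f k)

/-- `f` is a partial isometry of the cycle graph `C_n`: a partial injective map on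
`{1,...,n}` preserving the cycle distance. -/
def PIso (n : ℕ) (f : ℕ → Option ℕ) : Prop :=
  (∀ x y, f x = some y → x ∈ Finset.Icc 1 n ∧ y ∈ Finset.Icc 1 n) ∧
  (∀ x y z, f x = some z → f y = some z → x = y) ∧
  (∀ x y x' y', f x = some x' → f y = some y' → cdist n x' y' = cdist n x y)

/-- Domain of a partial map, as a set. -/
def DomS (f : ℕ → Option ℕ) : Set ℕ := {x | (f x).isSome}

/-- Image of a partial map, as a set. -/
def ImS (f : ℕ → Option ℕ) : Set ℕ := {y | ∃ x, f x = some y}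

/-- Domain of a partial map on `{1,...,n}`, as a finset. -/
def domF (n : ℕ) (f : ℕ → Option ℕ) : Finset ℕ :=
  (Finset.Icc 1 n).filter (fun x => (f x).isSome)

/-- The dihedral group `D_{2n}` as the set of the permutations `g^k` and `h·g^k`
(acting on the right, so `h·g^k` applies `h` first) of `{1,...,n}`, `0 ≤ k ≤ n-1`. -/
def Dih (n : ℕ) : Set (ℕ → ℕ) :=
  {σ | ∃ k < n, σ = (gfun n)^[k] ∨ σ = fun i => (gfun n)^[k] (hfun n i)}

/-- `σ` extends the partial map `f`. -/
def Extends (σ : ℕ → ℕ) (f : ℕ → Option ℕ) : Prop := ∀ x y, f x = some y → σ x = y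

/-- auxiliary: distance in `ZMod n` of a difference. -/
def zd (n : ℕ) (u : ZMod n) : ℕ := min u.val (-u).val

lemma zd_neg {n : ℕ} (u : ZMod n) : zd n (-u) = zd n u := by
  unfold zd; rw [neg_neg, min_comm]

lemma zd_sign {n : ℕ} [NeZero n] {u v : ZMod n} (h : zd n u = zd n v) : u = v ∨ u = -v := by
  have vi : Function.Injective (ZMod.val (n := n)) := ZMod.val_injective n
  unfold zd at h
  rcases le_total u.val (-u).val with h1 | h1 <;>
    rcases le_total v.val (-v).val with h2 | h2
  · rw [min_eq_left h1, min_eq_left h2] at h; exact Or.inl (vi h)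
  · rw [min_eq_left h1, min_eq_right h2] at h; exact Or.inr (vi h)
  · rw [min_eq_right h1, min_eq_left h2] at h
    right; rw [← vi h, neg_neg]
  · rw [min_eq_right h1, min_eq_right h2] at h
    exact Or.inl (neg_injective (vi h))

lemma cast_inj_Icc {n x y : ℕ} (hn : 0 < n) (hx : x ∈ Finset.Icc 1 n)
    (hy : y ∈ Finset.Icc 1 n) (h : (x : ZMod n) = y) : x = y := by
  have hm := (ZMod.natCast_eq_natCast_iff' x y n).mp h
  simp only [Finset.mem_Icc] at hx hy
  have hx' : x % n = if x < n then x else 0 := by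
    split
    · exact Nat.mod_eq_of_lt ‹_›
    · have : x = n := by omega
      simp [this]
  have hy' : y % n = if y < n then y else 0 := by
    split
    · exact Nat.mod_eq_of_lt ‹_›
    · have : y = n := by omega
      simp [this]
  split at hx' <;> split at hy' <;> omega

lemma cdist_comm (n x y : ℕ) : cdist n x y = cdist n y x := by
  unfold cdist
  rw [show ((y:ℤ) - x).natAbs = ((x:ℤ)-y).natAbs by omega]

lemma cdist_eq_zd_le {n x y : ℕ} (hn : 0 < n) (hxy : y ≤ x) (hx : x ∈ Finset.Icc 1 n)
    (hy : y ∈ Finset.Icc 1 n) : cdist n x y = zd n ((x : ZMod n) - y) := by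
  haveI : NeZero n := ⟨hn.ne'⟩
  simp only [Finset.mem_Icc] at hx hy
  have h1 : ((x:ℤ) - y).natAbs = x - y := by omega
  have h2 : ((x:ZMod n) - y) = ((x - y : ℕ) : ZMod n) := by
    rw [Nat.cast_sub hxy]
  rcases Nat.eq_zero_or_pos (x - y) with h0 | h0
  · unfold cdist zd
    rw [h1, h2, h0]
    simp
  · have hdlt : x - y < n := by omega
    have hval : ((x - y : ℕ) : ZMod n).val = x - y := ZMod.val_cast_of_lt hdlt
    have hne : ((x - y : ℕ) : ZMod n) ≠ 0 := by
      intro hc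
      rw [hc, ZMod.val_zero] at hval
      omega
    unfold cdist zd
    rw [h1, h2, hval, ZMod.neg_val, if_neg hne, hval]

lemma cdist_eq_zd {n x y : ℕ} (hn : 0 < n) (hx : x ∈ Finset.Icc 1 n)
    (hy : y ∈ Finset.Icc 1 n) : cdist n x y = zd n ((x : ZMod n) - y) := by
  rcases le_total y x with h | h
  · exact cdist_eq_zd_le hn h hx hy
  · rw [cdist_comm, cdist_eq_zd_le hn h hy hx,
      show (y:ZMod n) - x = -((x:ZMod n) - y) by ring, zd_neg]

lemma gfun_mem {n x : ℕ} (hn : 0 < n) (hx : x ∈ Finset.Icc 1 n) :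
    gfun n x ∈ Finset.Icc 1 n ∧ ((gfun n x : ZMod n)) = x + 1 := by
  simp only [Finset.mem_Icc] at hx ⊢
  unfold gfun
  split
  · exact ⟨by omega, by push_cast; ring⟩
  · have hxn : x = n := by omega
    subst hxn
    refine ⟨by omega, ?_⟩
    simp [ZMod.natCast_self]

lemma gpow_mem {n : ℕ} (hn : 0 < n) (k : ℕ) {x : ℕ} (hx : x ∈ Finset.Icc 1 n) :
    (gfun n)^[k] x ∈ Finset.Icc 1 n ∧ (((gfun n)^[k] x : ZMod n)) = x + k := by
  induction k generalizing x with
  | zero => simpa using hx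
  | succ k ih =>
    rw [Function.iterate_succ_apply]
    obtain ⟨h1, h2⟩ := gfun_mem hn hx
    obtain ⟨h3, h4⟩ := ih h1
    refine ⟨h3, ?_⟩
    rw [h4, h2]; push_cast; ring

lemma hfun_mem {n x : ℕ} (hn : 0 < n) (hx : x ∈ Finset.Icc 1 n) :
    hfun n x ∈ Finset.Icc 1 n ∧ ((hfun n x : ZMod n)) = 1 - x := by
  simp only [Finset.mem_Icc] at hx ⊢
  unfold hfun
  refine ⟨⟨by omega, by omega⟩, ?_⟩
  rw [show n - x + 1 = n + 1 - x by omega, Nat.cast_sub (by omega)]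
  push_cast
  rw [ZMod.natCast_self]; ring

lemma piso_of_cast {n : ℕ} (hn : 0 < n) (f : ℕ → Option ℕ) (σ : ℕ → ℕ)
    (hdom : ∀ x y, f x = some y → x ∈ Finset.Icc 1 n)
    (hext : Extends σ f)
    (hσI : ∀ x ∈ Finset.Icc 1 n, σ x ∈ Finset.Icc 1 n)
    (hσc : ∀ x ∈ Finset.Icc 1 n, ∀ y ∈ Finset.Icc 1 n,
      ((σ x : ZMod n) - σ y = (x : ZMod n) - y ∨ (σ x : ZMod n) - σ y = (y : ZMod n) - x)) :
    PIso n f := by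
  haveI : NeZero n := ⟨hn.ne'⟩
  refine ⟨?_, ?_, ?_⟩
  · intro x y hxy
    have hx := hdom x y hxy
    have := hext x y hxy
    exact ⟨hx, this ▸ hσI x hx⟩
  · intro x y z hx hy
    have hxI := hdom x z hx
    have hyI := hdom y z hy
    have h1 : σ x = σ y := by rw [hext x z hx, hext y z hy]
    have h2 : (σ x : ZMod n) = σ y := by rw [h1]
    refine cast_inj_Icc hn hxI hyI ?_
    rcases hσc x hxI y hyI with h | h <;>
      [ (have : (x : ZMod n) - y = 0 := by rw [← h, h2]; ring);
        (have : (y : ZMod n) - x = 0 := by rw [← h, h2]; ring)]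
    · linear_combination this
    · linear_combination -this
  · intro x y x' y' hx hy
    have hxI := hdom x x' hx
    have hyI := hdom y y' hy
    have hx' := hext x x' hx
    have hy' := hext y y' hy
    subst hx' hy'
    rw [cdist_eq_zd hn (hσI x hxI) (hσI y hyI), cdist_eq_zd hn hxI hyI]
    rcases hσc x hxI y hyI with h | h
    · rw [h]
    · rw [show (σ x : ZMod n) - σ y = -((x : ZMod n) - y) by rw [h]; ring, zd_neg]

/-- a partial transformation of `{1,...,n}` is a partial isometry of `C_n`
iff it is a restriction of an element of the dihedral group `D_{2n}`. -/
theorem stmt_6 (n : ℕ) (hn : 3 ≤ n) (f : ℕ → Option ℕ)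
    (hdom : ∀ x y, f x = some y → x ∈ Finset.Icc 1 n) :
    PIso n f ↔ ∃ σ ∈ Dih n, Extends σ f := by
  have hn0 : 0 < n := by omega
  haveI : NeZero n := ⟨hn0.ne'⟩
  have castval : ∀ u : ZMod n, ((u.val : ℕ) : ZMod n) = u := fun u =>
    ZMod.natCast_rightInverse u
  constructor
  · rintro ⟨hmem, hinj, hdist⟩
    by_cases hex : ∃ a a', f a = some a'
    case neg =>
      push_neg at hex
      exact ⟨(gfun n)^[0], ⟨0, hn0, Or.inl rfl⟩, fun x y hxy => absurd hxy (hex x y)⟩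
    obtain ⟨a, a', ha⟩ := hex
    obtain ⟨haI, haI'⟩ := hmem a a' ha
    have K2 : ∀ x x' y y', f x = some x' → f y = some y' →
        ((x' : ZMod n) - y' = (x : ZMod n) - y ∨ (x' : ZMod n) - y' = (y : ZMod n) - x) := by
      intro x x' y y' hx hy
      obtain ⟨hxI, hxI'⟩ := hmem x x' hx
      obtain ⟨hyI, hyI'⟩ := hmem y y' hy
      have hd := hdist x y x' y' hx hy
      rw [cdist_eq_zd hn0 hxI' hyI', cdist_eq_zd hn0 hxI hyI] at hd
      rcases zd_sign hd with h | h
      · exact Or.inl h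
      · right; rw [h]; ring
    by_cases hplus : ∀ x x', f x = some x' → (x' : ZMod n) - a' = (x : ZMod n) - a
    · refine ⟨(gfun n)^[((a' : ZMod n) - a).val],
        ⟨_, ZMod.val_lt _, Or.inl rfl⟩, ?_⟩
      intro x y hxy
      obtain ⟨hxI, hyI⟩ := hmem x y hxy
      obtain ⟨hgI, hgc⟩ := gpow_mem hn0 ((a' : ZMod n) - a).val hxI
      refine (cast_inj_Icc hn0 hgI hyI ?_)
      rw [hgc, castval]
      have h := hplus x y hxy
      linear_combination -h
    · push_neg at hplus
      obtain ⟨b, b', hb, hb2⟩ := hplus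
      have hbe : (b' : ZMod n) - a' = (a : ZMod n) - b :=
        (K2 b b' a a' hb ha).resolve_left hb2
      have h2ab : (b : ZMod n) - a ≠ (a : ZMod n) - b := fun h => hb2 (by rw [hbe, h])
      have Kall : ∀ x x', f x = some x' → (x' : ZMod n) - a' = (a : ZMod n) - x := by
        intro x x' hx
        rcases K2 x x' a a' hx ha with h | h
        · rcases K2 x x' b b' hx hb with h' | h'
          · exact absurd (by linear_combination h' + hbe - h) h2ab
          · linear_combination hbe + h'
        · exact h
      refine ⟨(fun i => (gfun n)^[((a' : ZMod n) + a - 1).val] (hfun n i)),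
        ⟨_, ZMod.val_lt _, Or.inr rfl⟩, ?_⟩
      intro x y hxy
      obtain ⟨hxI, hyI⟩ := hmem x y hxy
      obtain ⟨hhI, hhc⟩ := hfun_mem hn0 hxI
      obtain ⟨hgI, hgc⟩ := gpow_mem hn0 ((a' : ZMod n) + a - 1).val hhI
      refine cast_inj_Icc hn0 hgI hyI ?_
      rw [hgc, hhc, castval]
      have h := Kall x y hxy
      linear_combination -h
  · rintro ⟨σ, ⟨k, hk, hσ | hσ⟩, hext⟩ <;> subst hσ
    · refine piso_of_cast hn0 f _ hdom hext
        (fun x hx => (gpow_mem hn0 k hx).1) (fun x hx y hy => ?_)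
      rw [(gpow_mem hn0 k hx).2, (gpow_mem hn0 k hy).2]
      left; ring
    · refine piso_of_cast hn0 f _ hdom hext
        (fun x hx => (gpow_mem hn0 k (hfun_mem hn0 hx).1).1) (fun x hx y hy => ?_)
      rw [(gpow_mem hn0 k (hfun_mem hn0 hx).1).2, (gpow_mem hn0 k (hfun_mem hn0 hy).1).2,
        (hfun_mem hn0 hx).2, (hfun_mem hn0 hy).2]
      right; ring
end

section
/- Let n ≥ 3 and let α be a nonempty partial isometry of the cycle graph C_n. If |Dom(α)| = 1, or |Dom(α)| = 2 with d(min Dom(α), max Dom(α)) = n/2, then there exist exactly two distinct permutations σ, σ' in the dihedral group D_{2n} whose restrictions to Dom(α) equal α. -/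
lemma gfun_iter (n : ℕ) (hn : 1 ≤ n) (k : ℕ) :
    ∀ i, 1 ≤ i → i ≤ n → (gfun n)^[k] i = (i - 1 + k) % n + 1 := by
  induction k with
  | zero =>
    intro i h1 h2
    simp only [Function.iterate_zero, id_eq, Nat.add_zero,
      Nat.mod_eq_of_lt (show i - 1 < n by omega)]
    omega
  | succ k ih =>
    intro i h1 h2
    rw [Function.iterate_succ_apply]
    by_cases hi : i < n
    · have hg : gfun n i = i + 1 := by simp [gfun, hi]
      rw [hg, ih (i + 1) (by omega) (by omega)]
      congr 2
      omega
    · have hg : gfun n i = 1 := by simp [gfun, hi]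
      rw [hg, ih 1 le_rfl hn,
        show 1 - 1 + k = k from by omega,
        show i - 1 + (k + 1) = k + n from by omega, Nat.add_mod_right]

lemma mod3 (n C r : ℕ) (hr : r < n) (h : C = r ∨ C = r + n ∨ C = r + 2 * n) :
    C % n = r := by
  rcases h with h | h | h <;> subst h
  · exact Nat.mod_eq_of_lt hr
  · rw [Nat.add_mod_right]; exact Nat.mod_eq_of_lt hr
  · rw [show r + 2 * n = r + n + n from by ring, Nat.add_mod_right, Nat.add_mod_right]
    exact Nat.mod_eq_of_lt hr

lemma cancel_mod (n s m r : ℕ) (hm : m < n) (hr : r < n)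
    (h : (s + m) % n = (s + r) % n) : m = r := by
  have h2 : m ≡ r [MOD n] := Nat.ModEq.add_left_cancel' s h
  rwa [Nat.ModEq, Nat.mod_eq_of_lt hm, Nat.mod_eq_of_lt hr] at h2

/-- a nonempty partial isometry of `C_n` whose domain is a singleton, or a
pair at distance `n/2`, has exactly two distinct extensions in `D_{2n}` (distinctness
and uniqueness as permutations of `{1,...,n}`). -/
theorem stmt_7 (n : ℕ) (hn : 3 ≤ n) (f : ℕ → Option ℕ) (hf : PIso n f)
    (hd : (domF n f).card = 1 ∨
      ∃ i j, i < j ∧ domF n f = {i, j} ∧ 2 * cdist n i j = n) :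
    ∃ σ ∈ Dih n, ∃ σ' ∈ Dih n,
      (∃ x ∈ Finset.Icc 1 n, σ x ≠ σ' x) ∧ Extends σ f ∧ Extends σ' f ∧
      ∀ τ ∈ Dih n, Extends τ f →
        (∀ x ∈ Finset.Icc 1 n, τ x = σ x) ∨ (∀ x ∈ Finset.Icc 1 n, τ x = σ' x) := by
  obtain ⟨hdom, hinj, hiso⟩ := hf
  have hkey : ∃ a b, f a = some b ∧ ∀ x y, f x = some y →
      (x + b = y + a ∨ x + b = y + a + n ∨ y + a = x + b + n) ∧
      (x + y = a + b ∨ x + y = a + b + n ∨ a + b = x + y + n) := by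
    rcases hd with h1 | ⟨i, j, hij, hdf, hc⟩
    · obtain ⟨a, ha⟩ := Finset.card_eq_one.mp h1
      have hamem : a ∈ domF n f := ha ▸ Finset.mem_singleton_self a
      rw [domF, Finset.mem_filter] at hamem
      obtain ⟨b, hb⟩ := Option.isSome_iff_exists.mp hamem.2
      refine ⟨a, b, hb, fun x y hxy => ?_⟩
      have hx : x ∈ domF n f := by
        rw [domF, Finset.mem_filter]
        exact ⟨(hdom x y hxy).1, by rw [hxy]; rfl⟩
      rw [ha, Finset.mem_singleton] at hx
      subst hx
      obtain rfl : y = b := by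
        have := hxy.symm.trans hb
        injection this
      omega
    · have hi : i ∈ domF n f := hdf ▸ Finset.mem_insert_self _ _
      have hj : j ∈ domF n f :=
        hdf ▸ Finset.mem_insert_of_mem (Finset.mem_singleton_self j)
      rw [domF, Finset.mem_filter] at hi hj
      obtain ⟨p, hp⟩ := Option.isSome_iff_exists.mp hi.2
      obtain ⟨q, hq⟩ := Option.isSome_iff_exists.mp hj.2
      have hiI := hi.1
      have hjI := hj.1
      rw [Finset.mem_Icc] at hiI hjI
      have hpI := (hdom i p hp).2
      have hqI := (hdom j q hq).2
      rw [Finset.mem_Icc] at hpI hqI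
      have hji2 : 2 * (j - i) = n := by
        simp only [cdist] at hc; omega
      have hpq2 : 2 * p = 2 * q + n ∨ 2 * q = 2 * p + n := by
        have h2 : 2 * cdist n p q = n := by rw [hiso i j p q hp hq]; exact hc
        simp only [cdist] at h2; omega
      refine ⟨i, p, hp, fun x y hxy => ?_⟩
      have hx : x ∈ domF n f := by
        rw [domF, Finset.mem_filter]
        exact ⟨(hdom x y hxy).1, by rw [hxy]; rfl⟩
      rw [hdf, Finset.mem_insert, Finset.mem_singleton] at hx
      rcases hx with rfl | rfl
      · obtain rfl : y = p := by injection hxy.symm.trans hp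
        omega
      · obtain rfl : y = q := by injection hxy.symm.trans hq
        omega
  obtain ⟨a, b, hab, hcong⟩ := hkey
  have haI := (hdom a b hab).1
  have hbI := (hdom a b hab).2
  rw [Finset.mem_Icc] at haI hbI
  have hn1 : 1 ≤ n := by omega
  have hk1n : (b + n - a) % n < n := Nat.mod_lt _ (by omega)
  have hk2n : (a + b - 1) % n < n := Nat.mod_lt _ (by omega)
  refine ⟨(gfun n)^[(b + n - a) % n], ⟨(b + n - a) % n, hk1n, Or.inl rfl⟩,
    (fun i => (gfun n)^[(a + b - 1) % n] (hfun n i)),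
    ⟨(a + b - 1) % n, hk2n, Or.inr rfl⟩, ?_, ?_, ?_, ?_⟩
  · -- distinctness at the successor of a
    refine ⟨gfun n a, ?_, ?_⟩
    · unfold gfun; split <;> (rw [Finset.mem_Icc]; omega)
    · intro hEq
      replace hEq : (gfun n)^[(b + n - a) % n] (gfun n a) =
          (gfun n)^[(a + b - 1) % n] (hfun n (gfun n a)) := hEq
      have hx1 : 1 ≤ gfun n a ∧ gfun n a ≤ n := by unfold gfun; split <;> omega
      have hhx : 1 ≤ hfun n (gfun n a) ∧ hfun n (gfun n a) ≤ n := by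
        unfold hfun; omega
      rw [gfun_iter n hn1 _ _ hx1.1 hx1.2, gfun_iter n hn1 _ _ hhx.1 hhx.2,
        Nat.add_mod_mod, Nat.add_mod_mod] at hEq
      simp only [hfun, Nat.add_sub_cancel] at hEq
      by_cases han : a < n
      · have hx : gfun n a = a + 1 := by simp [gfun, han]
        rw [hx] at hEq
        rw [show a + 1 - 1 + (b + n - a) = (b + n - 2) + 2 from by omega,
          show n - (a + 1) + (a + b - 1) = b + n - 2 from by omega] at hEq
        have h3 : n ∣ 2 := by
          have h4 := (Nat.modEq_iff_dvd'
            (show b + n - 2 ≤ b + n - 2 + 2 from by omega)).mp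
            (Nat.add_right_cancel hEq).symm
          simpa using h4
        have := Nat.le_of_dvd (by norm_num) h3
        omega
      · have hx : gfun n a = 1 := by simp [gfun, han]
        rw [hx] at hEq
        rw [show 1 - 1 + (b + n - a) = b from by omega,
          show n - 1 + (a + b - 1) = b + (2 * n - 2) from by omega] at hEq
        have h3 : n ∣ 2 * n - 2 := by
          have h4 := (Nat.modEq_iff_dvd'
            (show b ≤ b + (2 * n - 2) from by omega)).mp
            (Nat.add_right_cancel hEq)
          simpa using h4
        have h4 : n ∣ 2 := by
          have h5 : n ∣ 2 * n := ⟨2, by ring⟩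
          have h6 := Nat.dvd_sub h5 h3
          rwa [show 2 * n - (2 * n - 2) = 2 from by omega] at h6
        have := Nat.le_of_dvd (by norm_num) h4
        omega
  · -- Extends σ1
    intro x y hxy
    have hxI := (hdom x y hxy).1
    have hyI := (hdom x y hxy).2
    rw [Finset.mem_Icc] at hxI hyI
    have hc1 := (hcong x y hxy).1
    rw [gfun_iter n hn1 _ _ hxI.1 hxI.2, Nat.add_mod_mod,
      mod3 n _ (y - 1) (by omega) (by omega)]
    omega
  · -- Extends σ2
    intro x y hxy
    have hxI := (hdom x y hxy).1
    have hyI := (hdom x y hxy).2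
    rw [Finset.mem_Icc] at hxI hyI
    have hc2 := (hcong x y hxy).2
    have hhx : 1 ≤ hfun n x ∧ hfun n x ≤ n := by unfold hfun; omega
    show (gfun n)^[(a + b - 1) % n] (hfun n x) = y
    rw [gfun_iter n hn1 _ _ hhx.1 hhx.2]
    simp only [hfun, Nat.add_sub_cancel]
    rw [Nat.add_mod_mod, mod3 n _ (y - 1) (by omega) (by omega)]
    omega
  · -- uniqueness
    intro τ hτ hext
    obtain ⟨m, hm, hτeq | hτeq⟩ := hτ
    · left
      have hta := hext a b hab
      rw [hτeq, gfun_iter n hn1 _ _ haI.1 haI.2] at hta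
      have hk1v : (a - 1 + (b + n - a) % n) % n = b - 1 := by
        rw [Nat.add_mod_mod]
        exact mod3 n _ (b - 1) (by omega) (by omega)
      have hme : m = (b + n - a) % n := by
        refine cancel_mod n (a - 1) m _ hm hk1n ?_
        rw [hk1v]
        omega
      rw [hτeq, hme]
      exact fun x _ => rfl
    · right
      have hta := hext a b hab
      have hha : 1 ≤ hfun n a ∧ hfun n a ≤ n := by unfold hfun; omega
      replace hta : (gfun n)^[m] (hfun n a) = b := by rw [hτeq] at hta; exact hta
      rw [gfun_iter n hn1 _ _ hha.1 hha.2] at hta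
      simp only [hfun, Nat.add_sub_cancel] at hta
      have hk2v : (n - a + (a + b - 1) % n) % n = b - 1 := by
        rw [Nat.add_mod_mod]
        exact mod3 n _ (b - 1) (by omega) (by omega)
      have hme : m = (a + b - 1) % n := by
        refine cancel_mod n (n - a) m _ hm hk2n ?_
        rw [hk2v]
        omega
      rw [hτeq, hme]
      exact fun x _ => rfl
end

section
/- Let n ≥ 3 and let α be a partial isometry of the cycle graph C_n. If |Dom(α)| = 2 with d(min Dom(α), max Dom(α)) ≠ n/2, or |Dom(α)| ≥ 3, then there exists exactly one permutation σ in the dihedral group D_{2n} with σ restricted to Dom(α) equal to α. -/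
section Stmt8Aux

lemma int_dvd_cases' (n m : ℤ) (hn : 0 < n) (h : n ∣ m) (hm : m.natAbs < 2*n) :
    m = -n ∨ m = 0 ∨ m = n := by
  rcases eq_or_ne m 0 with h0|h0
  · tauto
  have hd : n ∣ (m.natAbs : ℤ) := Int.dvd_natAbs.mpr h
  have h1 : n ≤ (m.natAbs : ℤ) := Int.le_of_dvd (by omega) hd
  have h3 : (m.natAbs:ℤ) - n = 0 :=
    Int.eq_zero_of_abs_lt_dvd (dvd_sub hd dvd_rfl) (by rw [abs_lt]; omega)
  omega

lemma eq_of_dvd' (n u v : ℕ) (h1 : 1 ≤ u) (h2 : u ≤ n) (h3 : 1 ≤ v) (h4 : v ≤ n)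
    (h : (n:ℤ) ∣ (u:ℤ) - v) : u = v := by
  have := Int.eq_zero_of_abs_lt_dvd h (by rw [abs_lt]; omega)
  omega

lemma cdist_eq_iff' (n x y z w : ℕ)
    (hx1 : 1 ≤ x) (hx2 : x ≤ n) (hy1 : 1 ≤ y) (hy2 : y ≤ n)
    (hz1 : 1 ≤ z) (hz2 : z ≤ n) (hw1 : 1 ≤ w) (hw2 : w ≤ n) :
    cdist n x y = cdist n z w ↔
      ((n:ℤ) ∣ ((x:ℤ) - y) - ((z:ℤ) - w) ∨ (n:ℤ) ∣ ((x:ℤ) - y) + ((z:ℤ) - w)) := by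
  unfold cdist
  constructor
  · intro h
    have hd : ((x:ℤ)-y) - ((z:ℤ)-w) = 0 ∨ ((x:ℤ)-y) - ((z:ℤ)-w) = n ∨ ((x:ℤ)-y) - ((z:ℤ)-w) = -n
        ∨ ((x:ℤ)-y) + ((z:ℤ)-w) = 0 ∨ ((x:ℤ)-y) + ((z:ℤ)-w) = n ∨ ((x:ℤ)-y) + ((z:ℤ)-w) = -n := by
      omega
    rcases hd with h'|h'|h'|h'|h'|h'
    exacts [Or.inl ⟨0, by omega⟩, Or.inl ⟨1, by omega⟩, Or.inl ⟨-1, by omega⟩,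
      Or.inr ⟨0, by omega⟩, Or.inr ⟨1, by omega⟩, Or.inr ⟨-1, by omega⟩]
  · rintro (h|h) <;>
    · have := int_dvd_cases' n _ (by omega) h (by omega)
      omega

lemma giter' (n : ℕ) (hn : 0 < n) (k i : ℕ) (h1 : 1 ≤ i) (h2 : i ≤ n) :
    1 ≤ (gfun n)^[k] i ∧ (gfun n)^[k] i ≤ n ∧ (n:ℤ) ∣ ((gfun n)^[k] i : ℤ) - (i + k) := by
  induction k generalizing i with
  | zero =>
    refine ⟨by simpa using h1, by simpa using h2, ⟨0, ?_⟩⟩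
    simp
  | succ k ih =>
    rw [Function.iterate_succ_apply]
    have hg1 : 1 ≤ gfun n i ∧ gfun n i ≤ n ∧
        ((gfun n i : ℤ) = i + 1 ∨ (gfun n i : ℤ) = (i:ℤ) + 1 - n) := by
      unfold gfun; split <;> omega
    obtain ⟨ha, hb, hc⟩ := ih (gfun n i) hg1.1 hg1.2.1
    obtain ⟨c, hcc⟩ := hc
    refine ⟨ha, hb, ?_⟩
    rcases hg1.2.2 with h'|h'
    · refine ⟨c, ?_⟩; push_cast at hcc ⊢; linarith
    · refine ⟨c - 1, ?_⟩; push_cast at hcc ⊢; rw [mul_sub]; linarith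

lemma hfun_facts' (n i : ℕ) (hn : 0 < n) (h1 : 1 ≤ i) (h2 : i ≤ n) :
    1 ≤ hfun n i ∧ hfun n i ≤ n ∧ (hfun n i : ℤ) = (n:ℤ) - i + 1 := by
  unfold hfun; omega

lemma dih_apply' (n : ℕ) (hn : 0 < n) (σ : ℕ → ℕ) (hσ : σ ∈ Dih n) :
    ∃ m : ℕ, (∀ i, 1 ≤ i → i ≤ n → 1 ≤ σ i ∧ σ i ≤ n ∧ (n:ℤ) ∣ (σ i : ℤ) - ((i:ℤ) + m)) ∨
      (∀ i, 1 ≤ i → i ≤ n → 1 ≤ σ i ∧ σ i ≤ n ∧ (n:ℤ) ∣ (σ i : ℤ) - (1 - (i:ℤ) + m)) := by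
  obtain ⟨k, hk, h|h⟩ := hσ
  · refine ⟨k, Or.inl fun i hi1 hi2 => ?_⟩
    subst h; exact giter' n hn k i hi1 hi2
  · refine ⟨k, Or.inr fun i hi1 hi2 => ?_⟩
    subst h
    beta_reduce
    obtain ⟨a1, a2, a3⟩ := hfun_facts' n i hn hi1 hi2
    obtain ⟨b1, b2, b3⟩ := giter' n hn k (hfun n i) a1 a2
    obtain ⟨c, hc⟩ := b3
    exact ⟨b1, b2, ⟨c + 1, by rw [mul_add]; linarith⟩⟩

lemma rot_exists' (n : ℕ) (hn : 0 < n) (t : ℤ) :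
    ∃ σ ∈ Dih n, ∀ i, 1 ≤ i → i ≤ n →
      1 ≤ σ i ∧ σ i ≤ n ∧ (n:ℤ) ∣ (σ i : ℤ) - ((i:ℤ) + t) := by
  have e0 : 0 ≤ t % n := Int.emod_nonneg t (by omega)
  have e1 : t % (n:ℤ) < n := Int.emod_lt_of_pos t (by exact_mod_cast hn)
  have e2 : (n:ℤ) * (t / n) + t % n = t := Int.mul_ediv_add_emod t n
  refine ⟨(gfun n)^[(t % n).toNat], ⟨(t % n).toNat, by omega, Or.inl rfl⟩, fun i hi1 hi2 => ?_⟩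
  obtain ⟨a1, a2, c, hc⟩ := giter' n hn (t % n).toNat i hi1 hi2
  have h1 : ((t % n).toNat : ℤ) = t % n := Int.toNat_of_nonneg e0
  exact ⟨a1, a2, ⟨c - t / n, by rw [mul_sub]; linarith⟩⟩

lemma ref_exists' (n : ℕ) (hn : 0 < n) (t : ℤ) :
    ∃ σ ∈ Dih n, ∀ i, 1 ≤ i → i ≤ n →
      1 ≤ σ i ∧ σ i ≤ n ∧ (n:ℤ) ∣ (σ i : ℤ) - (t - (i:ℤ)) := by
  have e0 : 0 ≤ (t-1) % n := Int.emod_nonneg (t-1) (by omega)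
  have e1 : (t-1) % (n:ℤ) < n := Int.emod_lt_of_pos (t-1) (by exact_mod_cast hn)
  have e2 : (n:ℤ) * ((t-1) / n) + (t-1) % n = t-1 := Int.mul_ediv_add_emod (t-1) n
  set k := ((t-1) % n).toNat with hk
  refine ⟨fun i => (gfun n)^[k] (hfun n i), ⟨k, by omega, Or.inr rfl⟩, fun i hi1 hi2 => ?_⟩
  beta_reduce
  obtain ⟨a1, a2, a3⟩ := hfun_facts' n i hn hi1 hi2
  obtain ⟨b1, b2, c, hc⟩ := giter' n hn k (hfun n i) a1 a2
  have h1 : (k : ℤ) = (t-1) % n := Int.toNat_of_nonneg e0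
  exact ⟨b1, b2, ⟨c - (t-1)/n + 1, by rw [mul_add, mul_sub, mul_one]; linarith⟩⟩

lemma key_ext' (n : ℕ) (f : ℕ → Option ℕ) (hf : PIso n f) (a b a' b' : ℕ)
    (hfa : f a = some a') (hfb : f b = some b')
    (hnd : ¬ (n:ℤ) ∣ 2*((a:ℤ) - b)) :
    ((n:ℤ) ∣ ((a':ℤ) - b') - ((a:ℤ) - b) →
      ∀ x x', f x = some x' → (n:ℤ) ∣ ((x':ℤ) - a') - ((x:ℤ) - a)) ∧
    ((n:ℤ) ∣ ((a':ℤ) - b') + ((a:ℤ) - b) →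
      ∀ x x', f x = some x' → (n:ℤ) ∣ ((x':ℤ) - a') + ((x:ℤ) - a)) := by
  have memb : ∀ {x x' : ℕ}, f x = some x' → 1 ≤ x ∧ x ≤ n ∧ 1 ≤ x' ∧ x' ≤ n := by
    intro x x' h
    have h2 := hf.1 x x' h
    simp only [Finset.mem_Icc] at h2
    omega
  obtain ⟨ba1, ba2, ba3, ba4⟩ := memb hfa
  obtain ⟨bb1, bb2, bb3, bb4⟩ := memb hfb
  constructor
  · rintro ⟨cA, hcA⟩ x x' hfx
    obtain ⟨bx1, bx2, bx3, bx4⟩ := memb hfx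
    have hxa := (cdist_eq_iff' n x' a' x a bx3 bx4 ba3 ba4 bx1 bx2 ba1 ba2).mp
      (hf.2.2 x a x' a' hfx hfa)
    have hxb := (cdist_eq_iff' n x' b' x b bx3 bx4 bb3 bb4 bx1 bx2 bb1 bb2).mp
      (hf.2.2 x b x' b' hfx hfb)
    rcases hxa with h1|⟨c1, hc1⟩
    · exact h1
    rcases hxb with ⟨c2, hc2⟩|⟨c2, hc2⟩
    · exact ⟨c2 - cA, by linear_combination hc2 - hcA⟩
    · exact absurd ⟨c2 - c1 - cA, by linear_combination hc2 - hc1 - hcA⟩ hnd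
  · rintro ⟨cA, hcA⟩ x x' hfx
    obtain ⟨bx1, bx2, bx3, bx4⟩ := memb hfx
    have hxa := (cdist_eq_iff' n x' a' x a bx3 bx4 ba3 ba4 bx1 bx2 ba1 ba2).mp
      (hf.2.2 x a x' a' hfx hfa)
    have hxb := (cdist_eq_iff' n x' b' x b bx3 bx4 bb3 bb4 bx1 bx2 bb1 bb2).mp
      (hf.2.2 x b x' b' hfx hfb)
    rcases hxa with ⟨c1, hc1⟩|h1
    swap
    · exact h1
    rcases hxb with ⟨c2, hc2⟩|⟨c2, hc2⟩
    · exact absurd ⟨c1 - c2 + cA, by linear_combination hc1 - hc2 + hcA⟩ hnd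
    · exact ⟨c2 - cA, by linear_combination hc2 - hcA⟩

end Stmt8Aux


/-- a partial isometry of `C_n` whose domain is a pair at distance `≠ n/2`,
or has at least three elements, has exactly one extension in `D_{2n}` (uniqueness as
permutations of `{1,...,n}`). -/
theorem stmt_8 (n : ℕ) (hn : 3 ≤ n) (f : ℕ → Option ℕ) (hf : PIso n f)
    (hd : (∃ i j, i < j ∧ domF n f = {i, j} ∧ 2 * cdist n i j ≠ n) ∨
      3 ≤ (domF n f).card) :
    ∃ σ ∈ Dih n, Extends σ f ∧
      ∀ τ ∈ Dih n, Extends τ f → ∀ x ∈ Finset.Icc 1 n, τ x = σ x := by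
  have hn0 : 0 < n := by omega
  have memb : ∀ {x x' : ℕ}, f x = some x' → 1 ≤ x ∧ x ≤ n ∧ 1 ≤ x' ∧ x' ≤ n := by
    intro x x' h
    have h2 := hf.1 x x' h
    simp only [Finset.mem_Icc] at h2
    omega
  have domb : ∀ x ∈ domF n f, (1 ≤ x ∧ x ≤ n) ∧ ∃ x', f x = some x' := by
    intro x hx
    simp only [domF, Finset.mem_filter, Finset.mem_Icc, Option.isSome_iff_exists] at hx
    exact hx
  -- Step A : find a suitable pair a b in the domain
  obtain ⟨a, b, ha, hb, hnd⟩ :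
      ∃ a b, a ∈ domF n f ∧ b ∈ domF n f ∧ ¬ (n:ℤ) ∣ 2*((a:ℤ) - b) := by
    rcases hd with ⟨i, j, hij, hdom, hcd⟩|hcard
    · have hi : i ∈ domF n f := by rw [hdom]; simp
      have hj : j ∈ domF n f := by rw [hdom]; simp
      obtain ⟨⟨hi1, hi2⟩, -⟩ := domb i hi
      obtain ⟨⟨hj1, hj2⟩, -⟩ := domb j hj
      refine ⟨i, j, hi, hj, fun hdvd => ?_⟩
      have := int_dvd_cases' n _ (by exact_mod_cast hn0) hdvd (by omega)
      exact hcd (by unfold cdist; omega)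
    · obtain ⟨a, b, c, ha, hb, hc, hab, hac, hbc⟩ := Finset.two_lt_card_iff.mp hcard
      obtain ⟨⟨ha1, ha2⟩, -⟩ := domb a ha
      obtain ⟨⟨hb1, hb2⟩, -⟩ := domb b hb
      obtain ⟨⟨hc1, hc2⟩, -⟩ := domb c hc
      by_cases h1 : (n:ℤ) ∣ 2*((a:ℤ) - b)
      · by_cases h2 : (n:ℤ) ∣ 2*((a:ℤ) - c)
        · exfalso
          have e1 := int_dvd_cases' n _ (by exact_mod_cast hn0) h1 (by omega)
          have e2 := int_dvd_cases' n _ (by exact_mod_cast hn0) h2 (by omega)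
          have : b = c := by omega
          exact hbc this
        · exact ⟨a, c, ha, hc, h2⟩
      · exact ⟨a, b, ha, hb, h1⟩
  obtain ⟨⟨ha1, ha2⟩, a', hfa⟩ := domb a ha
  obtain ⟨⟨hb1, hb2⟩, b', hfb⟩ := domb b hb
  obtain ⟨-, -, ha3, ha4⟩ := memb hfa
  obtain ⟨-, -, hb3, hb4⟩ := memb hfb
  -- Step B : the dichotomy
  have hiso := hf.2.2 a b a' b' hfa hfb
  have hkey := key_ext' n f hf a b a' b' hfa hfb hnd
  rcases (cdist_eq_iff' n a' b' a b ha3 ha4 hb3 hb4 ha1 ha2 hb1 hb2).mp hiso with hA|hA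
  · -- rotation case
    obtain ⟨σ, hσD, hσ⟩ := rot_exists' n hn0 ((a':ℤ) - a)
    have hext : Extends σ f := by
      intro x x' hfx
      obtain ⟨bx1, bx2, bx3, bx4⟩ := memb hfx
      obtain ⟨s1, s2, c2, hc2⟩ := hσ x bx1 bx2
      obtain ⟨c1, hc1⟩ := hkey.1 hA x x' hfx
      exact eq_of_dvd' n (σ x) x' s1 s2 bx3 bx4 ⟨c2 - c1, by linear_combination hc2 - hc1⟩
    refine ⟨σ, hσD, hext, ?_⟩
    intro τ hτD hτext x hx
    simp only [Finset.mem_Icc] at hx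
    obtain ⟨s1, s2, c2, hc2⟩ := hσ x hx.1 hx.2
    obtain ⟨m, hτ|hτ⟩ := dih_apply' n hn0 τ hτD
    · obtain ⟨t1, t2, c4, hc4⟩ := hτ x hx.1 hx.2
      obtain ⟨-, -, c3, hc3⟩ := hτ a ha1 ha2
      rw [hτext a a' hfa] at hc3
      exact eq_of_dvd' n (τ x) (σ x) t1 t2 s1 s2
        ⟨c4 - c2 - c3, by linear_combination hc4 - hc2 - hc3⟩
    · exfalso
      obtain ⟨-, -, c3, hc3⟩ := hτ a ha1 ha2
      obtain ⟨-, -, c4, hc4⟩ := hτ b hb1 hb2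
      rw [hτext a a' hfa] at hc3
      rw [hτext b b' hfb] at hc4
      obtain ⟨cA, hcA⟩ := hA
      exact hnd ⟨c3 - c4 - cA, by linear_combination hc3 - hc4 - hcA⟩
  · -- reflection case
    obtain ⟨σ, hσD, hσ⟩ := ref_exists' n hn0 ((a':ℤ) + a)
    have hext : Extends σ f := by
      intro x x' hfx
      obtain ⟨bx1, bx2, bx3, bx4⟩ := memb hfx
      obtain ⟨s1, s2, c2, hc2⟩ := hσ x bx1 bx2
      obtain ⟨c1, hc1⟩ := hkey.2 hA x x' hfx
      exact eq_of_dvd' n (σ x) x' s1 s2 bx3 bx4 ⟨c2 - c1, by linear_combination hc2 - hc1⟩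
    refine ⟨σ, hσD, hext, ?_⟩
    intro τ hτD hτext x hx
    simp only [Finset.mem_Icc] at hx
    obtain ⟨s1, s2, c2, hc2⟩ := hσ x hx.1 hx.2
    obtain ⟨m, hτ|hτ⟩ := dih_apply' n hn0 τ hτD
    · exfalso
      obtain ⟨-, -, c3, hc3⟩ := hτ a ha1 ha2
      obtain ⟨-, -, c4, hc4⟩ := hτ b hb1 hb2
      rw [hτext a a' hfa] at hc3
      rw [hτext b b' hfb] at hc4
      obtain ⟨cA, hcA⟩ := hA
      exact hnd ⟨cA - c3 + c4, by linear_combination hcA - hc3 + hc4⟩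
    · obtain ⟨t1, t2, c4, hc4⟩ := hτ x hx.1 hx.2
      obtain ⟨-, -, c3, hc3⟩ := hτ a ha1 ha2
      rw [hτext a a' hfa] at hc3
      exact eq_of_dvd' n (τ x) (σ x) t1 t2 s1 s2
        ⟨c4 - c2 - c3, by linear_combination hc4 - hc2 - hc3⟩
end

section
/- For n ≥ 3, every partial isometry of the cycle graph C_n is an oriented partial permutation, i.e. the monoid DPC_n is contained in POR_n ∩ I_n. -/
/-- Number of cyclic descents of a sequence. -/
def descents (s : List ℕ) : ℕ :=
  ((List.range s.length).filter fun i =>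
    s.getD ((i + 1) % s.length) 0 < s.getD i 0).length

/-- Number of cyclic ascents of a sequence. -/
def ascents (s : List ℕ) : ℕ :=
  ((List.range s.length).filter fun i =>
    s.getD i 0 < s.getD ((i + 1) % s.length) 0).length





lemma aux_cdist_val (n : ℕ) [NeZero n] {x y : ℕ}
    (hx : x ∈ Finset.Icc 1 n) (hy : y ∈ Finset.Icc 1 n) :
    cdist n x y = min ((x : ZMod n) - y).val (n - ((x : ZMod n) - y).val) := by
  simp only [Finset.mem_Icc] at hx hy
  have hn : 0 < n := Nat.pos_of_ne_zero (NeZero.ne n)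
  have h1 : ((x : ZMod n) - y) = (((x : ℤ) - y : ℤ) : ZMod n) := by push_cast; ring
  set a : ℤ := (x : ℤ) - y with ha
  have h2 : (((a : ZMod n)).val : ℤ) = a % n := ZMod.val_intCast a
  have hb1 : -(n : ℤ) < a := by omega
  have hb2 : a < n := by omega
  rw [h1]
  set m := ((a : ZMod n)).val with hm
  have hmlt : m < n := ZMod.val_lt _
  rcases le_or_gt 0 a with h | h
  · have : a % n = a := Int.emod_eq_of_lt h hb2
    rw [this] at h2
    unfold cdist
    omega
  · have : a % n = a + n := by
      rw [show a % (n:ℤ) = (a + n) % n by rw [Int.add_emod_right]]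
      exact Int.emod_eq_of_lt (by omega) (by omega)
    rw [this] at h2
    unfold cdist
    omega

lemma aux_pm (n : ℕ) [NeZero n] {x y x' y' : ℕ}
    (hx : x ∈ Finset.Icc 1 n) (hy : y ∈ Finset.Icc 1 n)
    (hx' : x' ∈ Finset.Icc 1 n) (hy' : y' ∈ Finset.Icc 1 n)
    (h : cdist n x' y' = cdist n x y) :
    ((x' : ZMod n) - y') = ((x : ZMod n) - y) ∨ ((x' : ZMod n) - y') = -((x : ZMod n) - y) := by
  rw [aux_cdist_val n hx' hy', aux_cdist_val n hx hy] at h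
  set u : ZMod n := (x : ZMod n) - y with hu
  set v : ZMod n := (x' : ZMod n) - y' with hv
  have hun : u.val < n := ZMod.val_lt _
  have hvn : v.val < n := ZMod.val_lt _
  have : v.val = u.val ∨ (u.val + v.val = n ∧ u.val ≠ 0 ∧ v.val ≠ 0) := by omega
  rcases this with h' | ⟨h', hu0, hv0⟩
  · exact Or.inl (ZMod.val_injective n h')
  · right
    have hune : u ≠ 0 := fun h0 => hu0 (by rw [h0]; exact ZMod.val_zero)
    haveI : NeZero u := ⟨hune⟩
    have : (-u).val = n - u.val := ZMod.val_neg_of_ne_zero u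
    exact ZMod.val_injective n (by omega)

lemma aux_affine (n : ℕ) [NeZero n] (f : ℕ → Option ℕ) (hf : PIso n f) :
    ∃ ε c : ZMod n, (ε = 1 ∨ ε = -1) ∧ ∀ x y, f x = some y → (y : ZMod n) = ε * x + c := by
  obtain ⟨hdomf, hinj, hiso⟩ := hf
  have pm : ∀ x y x' y', f x = some x' → f y = some y' →
      (((x' : ZMod n) - y') = ((x : ZMod n) - y) ∨ ((x' : ZMod n) - y') = -((x : ZMod n) - y)) := by
    intro x y x' y' hx hy
    exact aux_pm n (hdomf _ _ hx).1 (hdomf _ _ hy).1 (hdomf _ _ hx).2 (hdomf _ _ hy).2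
      (hiso _ _ _ _ hx hy)
  by_cases hd : ∃ x y x' y', f x = some x' ∧ f y = some y' ∧ 2 * ((x : ZMod n) - y) ≠ 0
  · obtain ⟨x0, y0, u0, v0, hx0, hy0, h2⟩ := hd
    rcases pm x0 y0 u0 v0 hx0 hy0 with hε | hε
    · refine ⟨1, (u0 : ZMod n) - x0, Or.inl rfl, ?_⟩
      intro z w hz
      rcases pm z x0 w u0 hz hx0 with h1 | h1
      · linear_combination h1
      · rcases pm z y0 w v0 hz hy0 with h2' | h2'
        · linear_combination h2' - hε
        · exact absurd (by linear_combination h2' - h1 - hε) h2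
    · refine ⟨-1, (u0 : ZMod n) + x0, Or.inr rfl, ?_⟩
      intro z w hz
      rcases pm z x0 w u0 hz hx0 with h1 | h1
      · rcases pm z y0 w v0 hz hy0 with h2' | h2'
        · exact absurd (by linear_combination h1 - h2' + hε) h2
        · linear_combination h2' - hε
      · linear_combination h1
  · push_neg at hd
    by_cases hne : ∃ x y, f x = some y
    · obtain ⟨x0, u0, hx0⟩ := hne
      refine ⟨1, (u0 : ZMod n) - x0, Or.inl rfl, ?_⟩
      intro z w hz
      rcases pm z x0 w u0 hz hx0 with h1 | h1
      · linear_combination h1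
      · linear_combination h1 - hd z x0 w u0 hz hx0
    · exact ⟨1, 0, Or.inl rfl, fun x y hxy => absurd ⟨x, y, hxy⟩ hne⟩


lemma aux_filter_card (p : ℕ → Prop) [DecidablePred p] (k : ℕ) :
    ((List.range k).filter fun i => p i).length = ((Finset.range k).filter p).card := by
  induction k with
  | zero => simp
  | succ k ih =>
      rw [List.range_succ, Finset.range_add_one, List.filter_append, Finset.filter_insert]
      by_cases h : p k
      · rw [if_pos h, List.length_append, ih, Finset.card_insert_of_notMem (by simp)]
        simp [h]
      · rw [if_neg h, List.length_append, ih]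
        simp [h]

lemma aux_term_mod (n : ℕ) {a b : ℕ} (ha : 1 ≤ a) (ha' : a ≤ n) (hb : 1 ≤ b) (hb' : b ≤ n) :
    ((b : ℤ) - a) % n = ((b : ℤ) - a) + if b < a then (n : ℤ) else 0 := by
  rcases lt_or_ge b a with h | h
  · rw [if_pos h, show ((b:ℤ) - a) % n = ((b:ℤ) - a + n) % n from (Int.add_emod_right _ _).symm]
    exact Int.emod_eq_of_lt (by omega) (by omega)
  · rw [if_neg (by omega), add_zero]
    exact Int.emod_eq_of_lt (by omega) (by omega)

lemma aux_cyc_sum (len : ℕ) (g : ℕ → ℤ) :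
    ∑ i ∈ Finset.range len, g ((i + 1) % len) = ∑ i ∈ Finset.range len, g i := by
  rcases Nat.eq_zero_or_pos len with rfl | hl
  · simp
  refine Finset.sum_nbij' (fun i => (i + 1) % len) (fun j => if j = 0 then len - 1 else j - 1)
    ?_ ?_ ?_ ?_ ?_
  · intro a ha; exact Finset.mem_range.mpr (Nat.mod_lt _ hl)
  · intro a ha
    simp only [Finset.mem_range] at ha ⊢
    split <;> omega
  · intro a ha
    simp only [Finset.mem_range] at ha
    rcases Nat.lt_or_ge (a + 1) len with h | h
    · rw [Nat.mod_eq_of_lt h]; simp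
    · have : a + 1 = len := by omega
      rw [this, Nat.mod_self]; simp; omega
  · intro a ha
    simp only [Finset.mem_range] at ha
    by_cases h : a = 0
    · subst h; simp [Nat.sub_add_cancel hl, Nat.mod_self]
    · rw [if_neg h, Nat.sub_add_cancel (by omega), Nat.mod_eq_of_lt ha]
  · intro a ha; rfl

lemma aux_sum_descents (n : ℕ) (s : List ℕ) (hs : ∀ x ∈ s, 1 ≤ x ∧ x ≤ n) :
    ∑ i ∈ Finset.range s.length,
      (((s.getD ((i + 1) % s.length) 0 : ℤ) - (s.getD i 0 : ℤ)) % n) = n * descents s := by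
  set len := s.length with hlen
  have hmem : ∀ i, i < len → 1 ≤ s.getD i 0 ∧ s.getD i 0 ≤ n := by
    intro i hi
    rw [List.getD_eq_getElem s 0 hi]
    exact hs _ (List.getElem_mem hi)
  have step : ∀ i ∈ Finset.range len,
      (((s.getD ((i + 1) % len) 0 : ℤ) - (s.getD i 0 : ℤ)) % n)
        = (((s.getD ((i + 1) % len) 0 : ℤ) - (s.getD i 0 : ℤ))
          + if s.getD ((i + 1) % len) 0 < s.getD i 0 then (n : ℤ) else 0) := by
    intro i hi
    rw [Finset.mem_range] at hi
    have h1 := hmem i hi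
    have h2 := hmem _ (Nat.mod_lt (i + 1) (by omega))
    exact aux_term_mod n h1.1 h1.2 h2.1 h2.2
  rw [Finset.sum_congr rfl step, Finset.sum_add_distrib, Finset.sum_sub_distrib,
    aux_cyc_sum len (fun j => (s.getD j 0 : ℤ)), sub_self, zero_add, ← Finset.sum_filter,
    Finset.sum_const, nsmul_eq_mul]
  rw [descents, aux_filter_card, ← hlen, mul_comm]

lemma aux_sum_ascents (n : ℕ) (s : List ℕ) (hs : ∀ x ∈ s, 1 ≤ x ∧ x ≤ n) :
    ∑ i ∈ Finset.range s.length,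
      (((s.getD i 0 : ℤ) - (s.getD ((i + 1) % s.length) 0 : ℤ)) % n) = n * ascents s := by
  set len := s.length with hlen
  have hmem : ∀ i, i < len → 1 ≤ s.getD i 0 ∧ s.getD i 0 ≤ n := by
    intro i hi
    rw [List.getD_eq_getElem s 0 hi]
    exact hs _ (List.getElem_mem hi)
  have step : ∀ i ∈ Finset.range len,
      (((s.getD i 0 : ℤ) - (s.getD ((i + 1) % len) 0 : ℤ)) % n)
        = (((s.getD i 0 : ℤ) - (s.getD ((i + 1) % len) 0 : ℤ))
          + if s.getD i 0 < s.getD ((i + 1) % len) 0 then (n : ℤ) else 0) := by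
    intro i hi
    rw [Finset.mem_range] at hi
    have h1 := hmem i hi
    have h2 := hmem _ (Nat.mod_lt (i + 1) (by omega))
    exact aux_term_mod n h2.1 h2.2 h1.1 h1.2
  rw [Finset.sum_congr rfl step, Finset.sum_add_distrib, Finset.sum_sub_distrib,
    aux_cyc_sum len (fun j => (s.getD j 0 : ℤ)), sub_self, zero_add, ← Finset.sum_filter,
    Finset.sum_const, nsmul_eq_mul]
  rw [ascents, aux_filter_card, ← hlen, mul_comm]

lemma aux_descents_sorted (s : List ℕ) (hsort : s.Pairwise (· < ·)) : descents s ≤ 1 := by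
  rw [descents, aux_filter_card]
  have hsub : (Finset.range s.length).filter
      (fun i => s.getD ((i + 1) % s.length) 0 < s.getD i 0) ⊆ {s.length - 1} := by
    intro i hi
    rw [Finset.mem_filter, Finset.mem_range] at hi
    obtain ⟨hi1, hi2⟩ := hi
    rw [Finset.mem_singleton]
    by_contra hne
    have hlt : i + 1 < s.length := by omega
    rw [Nat.mod_eq_of_lt hlt, List.getD_eq_getElem s 0 hlt, List.getD_eq_getElem s 0 hi1] at hi2
    have := List.Pairwise.rel_get_of_lt hsort
      (a := ⟨i, hi1⟩) (b := ⟨i + 1, hlt⟩) (by simp)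
    simp only [List.get_eq_getElem] at this
    omega
  calc _ ≤ ({s.length - 1} : Finset ℕ).card := Finset.card_le_card hsub
    _ = 1 := Finset.card_singleton _

/-- every partial isometry of `C_n` is oriented: listing the domain in
increasing order, the sequence of images is cyclic (≤ 1 cyclic descent) or anti-cyclic
(≤ 1 cyclic ascent). -/
theorem stmt_9 (n : ℕ) (hn : 3 ≤ n) (f : ℕ → Option ℕ) (hf : PIso n f) :
    descents (((domF n f).sort (· ≤ ·)).map fun x => (f x).getD 0) ≤ 1 ∨
    ascents (((domF n f).sort (· ≤ ·)).map fun x => (f x).getD 0) ≤ 1 := by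
  haveI : NeZero n := ⟨by omega⟩
  classical
  set l := (domF n f).sort (· ≤ ·) with hl
  set F : ℕ → ℕ := fun x => (f x).getD 0 with hF
  obtain ⟨ε, c, hε, key⟩ := aux_affine n f hf
  have hmem : ∀ x ∈ l, f x = some (F x) ∧ 1 ≤ x ∧ x ≤ n := by
    intro x hx
    rw [hl, Finset.mem_sort, domF, Finset.mem_filter, Finset.mem_Icc] at hx
    obtain ⟨⟨h1, h2⟩, h3⟩ := hx
    obtain ⟨y, hy⟩ := Option.isSome_iff_exists.mp h3
    refine ⟨?_, h1, h2⟩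
    rw [hy]; simp [hF, hy]
  have himg : ∀ y ∈ l.map F, 1 ≤ y ∧ y ≤ n := by
    intro y hy
    rw [List.mem_map] at hy
    obtain ⟨x, hx, rfl⟩ := hy
    have := (hf.1 x (F x) (hmem x hx).1).2
    rw [Finset.mem_Icc] at this; exact this
  have hkey : ∀ x ∈ l, ((F x : ZMod n)) = ε * x + c := fun x hx => key x (F x) (hmem x hx).1
  have hlen : (l.map F).length = l.length := List.length_map _
  have hdl : descents l ≤ 1 := aux_descents_sorted l (Finset.sortedLT_sort _).pairwise
  have hget : ∀ i, i < l.length → (l.map F).getD i 0 = F (l.getD i 0) := by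
    intro i hi
    rw [List.getD_eq_getElem _ 0 (by rwa [hlen]), List.getD_eq_getElem _ 0 hi, List.getElem_map]
  have hmemi : ∀ i, i < l.length → l.getD i 0 ∈ l := by
    intro i hi; rw [List.getD_eq_getElem _ 0 hi]; exact List.getElem_mem hi
  have hn0 : (n : ℤ) ≠ 0 := by exact_mod_cast (by omega : n ≠ 0)
  rcases hε with hε | hε
  · left
    have hsum := aux_sum_descents n (l.map F) himg
    have hsum2 := aux_sum_descents n l (fun x hx => (hmem x hx).2)
    have hcong : ∑ i ∈ Finset.range (l.map F).length,
        ((((l.map F).getD ((i + 1) % (l.map F).length) 0 : ℤ)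
          - ((l.map F).getD i 0 : ℤ)) % n)
        = ∑ i ∈ Finset.range l.length,
          (((l.getD ((i + 1) % l.length) 0 : ℤ) - (l.getD i 0 : ℤ)) % n) := by
      rw [hlen]
      refine Finset.sum_congr rfl ?_
      intro i hi
      rw [Finset.mem_range] at hi
      have hi2 : (i + 1) % l.length < l.length := Nat.mod_lt _ (by omega)
      rw [hget _ hi2, hget _ hi]
      have ha : ((F (l.getD i 0) : ℤ) : ZMod n) = (l.getD i 0 : ℤ) + c := by
        push_cast
        rw [hkey _ (hmemi _ hi), hε, one_mul]
      have hb : ((F (l.getD ((i + 1) % l.length) 0) : ℤ) : ZMod n)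
          = (l.getD ((i + 1) % l.length) 0 : ℤ) + c := by
        push_cast
        rw [hkey _ (hmemi _ hi2), hε, one_mul]
      refine (ZMod.intCast_eq_intCast_iff _ _ _).mp ?_
      push_cast
      push_cast at ha hb
      rw [ha, hb]; ring
    rw [hcong, hsum2] at hsum
    have heq : descents (l.map F) = descents l := by
      exact_mod_cast mul_left_cancel₀ hn0 hsum.symm
    omega
  · right
    have hsum := aux_sum_ascents n (l.map F) himg
    have hsum2 := aux_sum_descents n l (fun x hx => (hmem x hx).2)
    have hcong : ∑ i ∈ Finset.range (l.map F).length,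
        ((((l.map F).getD i 0 : ℤ)
          - ((l.map F).getD ((i + 1) % (l.map F).length) 0 : ℤ)) % n)
        = ∑ i ∈ Finset.range l.length,
          (((l.getD ((i + 1) % l.length) 0 : ℤ) - (l.getD i 0 : ℤ)) % n) := by
      rw [hlen]
      refine Finset.sum_congr rfl ?_
      intro i hi
      rw [Finset.mem_range] at hi
      have hi2 : (i + 1) % l.length < l.length := Nat.mod_lt _ (by omega)
      rw [hget _ hi2, hget _ hi]
      have ha : ((F (l.getD i 0) : ℤ) : ZMod n) = -(l.getD i 0 : ℤ) + c := by
        push_cast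
        rw [hkey _ (hmemi _ hi), hε]; ring
      have hb : ((F (l.getD ((i + 1) % l.length) 0) : ℤ) : ZMod n)
          = -(l.getD ((i + 1) % l.length) 0 : ℤ) + c := by
        push_cast
        rw [hkey _ (hmemi _ hi2), hε]; ring
      refine (ZMod.intCast_eq_intCast_iff _ _ _).mp ?_
      push_cast
      push_cast at ha hb
      rw [ha, hb]; ring
    rw [hcong, hsum2] at hsum
    have heq : ascents (l.map F) = descents l := by
      exact_mod_cast mul_left_cancel₀ hn0 hsum.symm
    omega
end

section
/- For even n ≥ 4, the number of partial isometries α of C_n with |Dom(α)| = 2 and d(min Dom(α), max Dom(α)) = n/2 is n²/2; explicitly these are the maps sending {i, i+n/2} to {j, j+n/2} (in either of the two ways) for 1 ≤ i, j ≤ n/2. -/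
/-- The partial map sending `a ↦ c` and `b ↦ d` (undefined elsewhere). -/
def pmap2 (a b c d : ℕ) : ℕ → Option ℕ :=
  fun x => if x = a then some c else if x = b then some d else none

lemma pmap2_eq_some {a b c d x y : ℕ} (h : pmap2 a b c d x = some y) :
    (x = a ∧ y = c) ∨ (x ≠ a ∧ x = b ∧ y = d) := by
  unfold pmap2 at h; split_ifs at h <;> simp_all

lemma piso_gen (m i c d : ℕ) (hm : 1 ≤ m) (hi : 1 ≤ i) (him : i ≤ m)
    (hc : 1 ≤ c) (hc2 : c ≤ 2*m) (hd : 1 ≤ d) (hd2 : d ≤ 2*m)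
    (hcd : c + m = d ∨ d + m = c) : PIso (2*m) (pmap2 i (i+m) c d) := by
  refine ⟨?_, ?_, ?_⟩
  · intro x y h
    rcases pmap2_eq_some h with ⟨rfl, rfl⟩ | ⟨_, rfl, rfl⟩ <;>
      simp [Finset.mem_Icc] <;> omega
  · intro x y z hx hy
    rcases pmap2_eq_some hx with ⟨rfl, rfl⟩ | ⟨h1, rfl, rfl⟩ <;>
      rcases pmap2_eq_some hy with ⟨rfl, h2⟩ | ⟨h3, rfl, h4⟩ <;> omega
  · intro x y x' y' hx hy
    rcases pmap2_eq_some hx with ⟨rfl, rfl⟩ | ⟨h1, rfl, rfl⟩ <;>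
      rcases pmap2_eq_some hy with ⟨rfl, rfl⟩ | ⟨h3, rfl, rfl⟩ <;>
      (unfold cdist; push_cast; omega)

lemma domF_gen (m i c d : ℕ) (hm : 1 ≤ m) (hi : 1 ≤ i) (him : i ≤ m) :
    domF (2*m) (pmap2 i (i+m) c d) = {i, i+m} := by
  ext x
  simp only [domF, Finset.mem_filter, Finset.mem_Icc, Finset.mem_insert,
    Finset.mem_singleton]
  simp only [pmap2]
  constructor
  · rintro ⟨⟨h1, h2⟩, h3⟩
    split_ifs at h3 <;> simp_all
  · rintro (rfl | rfl)
    · exact ⟨⟨hi, by omega⟩, by simp⟩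
    · refine ⟨⟨by omega, by omega⟩, ?_⟩
      have hne : i + m ≠ i := by omega
      simp [hne, show m ≠ 0 by omega]

lemma pmap2_ext {m i c d i' c' d' : ℕ} (hm : 1 ≤ m) (hi : 1 ≤ i) (him : i ≤ m)
    (hi' : 1 ≤ i') (him' : i' ≤ m)
    (h : pmap2 i (i+m) c d = pmap2 i' (i'+m) c' d') : i = i' ∧ c = c' ∧ d = d' := by
  have h1 := congrFun h i'
  have hii : i = i' := by
    unfold pmap2 at h1; split_ifs at h1 <;> first | omega | simp_all
  subst hii
  have h2 := congrFun h i
  have h3 := congrFun h (i+m)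
  unfold pmap2 at h2 h3
  have hne : i + m ≠ i := by omega
  simp [hne, show m ≠ 0 by omega] at h2 h3
  exact ⟨rfl, h2, h3⟩

def fenc (m : ℕ) : (ℕ × ℕ) × Bool → (ℕ → Option ℕ) :=
  fun p => if p.2 then pmap2 p.1.1 (p.1.1+m) p.1.2 (p.1.2+m)
           else pmap2 p.1.1 (p.1.1+m) (p.1.2+m) p.1.2

lemma fenc_true (m i j : ℕ) : fenc m ((i,j),true) = pmap2 i (i+m) j (j+m) := rfl
lemma fenc_false (m i j : ℕ) : fenc m ((i,j),false) = pmap2 i (i+m) (j+m) j := rfl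

/-- for even `n ≥ 4`, the partial isometries of `C_n` with domain a pair
at distance `n/2` are exactly the maps sending `{i, i+n/2}` to `{j, j+n/2}` in either
way (`1 ≤ i, j ≤ n/2`), and there are `n²/2` of them. -/
theorem stmt_13 (n : ℕ) (hn : 4 ≤ n) (he : Even n) :
    {f : ℕ → Option ℕ | PIso n f ∧
        ∃ i j, i < j ∧ domF n f = {i, j} ∧ 2 * cdist n i j = n} =
      {f : ℕ → Option ℕ | ∃ i j, 1 ≤ i ∧ i ≤ n / 2 ∧ 1 ≤ j ∧ j ≤ n / 2 ∧
        (f = pmap2 i (i + n / 2) j (j + n / 2) ∨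
         f = pmap2 i (i + n / 2) (j + n / 2) j)} ∧
    2 * Set.ncard {f : ℕ → Option ℕ | PIso n f ∧
        ∃ i j, i < j ∧ domF n f = {i, j} ∧ 2 * cdist n i j = n} = n ^ 2 := by
  classical
  obtain ⟨m, rfl⟩ : ∃ m, n = 2 * m := ⟨n / 2, by obtain ⟨r, hr⟩ := he; omega⟩
  have hm2 : 2 ≤ m := by omega
  have hhalf : 2 * m / 2 = m := by omega
  rw [hhalf]
  have hset : {f : ℕ → Option ℕ | PIso (2*m) f ∧
        ∃ i j, i < j ∧ domF (2*m) f = {i, j} ∧ 2 * cdist (2*m) i j = 2*m} =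
      {f : ℕ → Option ℕ | ∃ i j, 1 ≤ i ∧ i ≤ m ∧ 1 ≤ j ∧ j ≤ m ∧
        (f = pmap2 i (i + m) j (j + m) ∨ f = pmap2 i (i + m) (j + m) j)} := by
    ext f
    simp only [Set.mem_setOf_eq]
    constructor
    · rintro ⟨⟨hmem, hinj, hdist⟩, i, j, hij, hdom, hdij⟩
      have hidom : i ∈ domF (2*m) f := by rw [hdom]; simp
      have hjdom : j ∈ domF (2*m) f := by rw [hdom]; simp
      simp only [domF, Finset.mem_filter, Finset.mem_Icc] at hidom hjdom
      obtain ⟨⟨hi1, hi2⟩, hfi⟩ := hidom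
      obtain ⟨⟨hj1, hj2⟩, hfj⟩ := hjdom
      obtain ⟨c, hc⟩ := Option.isSome_iff_exists.mp hfi
      obtain ⟨d, hdd⟩ := Option.isSome_iff_exists.mp hfj
      have hji : j = i + m := by unfold cdist at hdij; omega
      have hcmem := hmem i c hc
      have hdmem := hmem j d hdd
      simp only [Finset.mem_Icc] at hcmem hdmem
      have hcd : cdist (2*m) c d = cdist (2*m) i j := hdist i j c d hc hdd
      have hcd' : c + m = d ∨ d + m = c := by
        unfold cdist at hcd hdij; omega
      have hfx : ∀ x, x ≠ i → x ≠ j → f x = none := by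
        intro x hxi hxj
        cases hx : f x with
        | none => rfl
        | some y =>
          have hxm := hmem x y hx
          have hxd : x ∈ domF (2*m) f := by
            simp only [domF, Finset.mem_filter, hx]
            exact ⟨hxm.1, rfl⟩
          rw [hdom] at hxd
          simp at hxd
          tauto
      rcases hcd' with h1 | h1
      · refine ⟨i, c, hi1, by omega, hcmem.2.1, by omega, Or.inl ?_⟩
        funext x
        unfold pmap2
        split_ifs with ha hb
        · subst ha; rw [hc]
        · subst hb; rw [← hji, hdd]; congr 1; omega
        · exact hfx x ha (by omega)
      · refine ⟨i, d, hi1, by omega, hdmem.2.1, by omega, Or.inr ?_⟩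
        funext x
        unfold pmap2
        split_ifs with ha hb
        · subst ha; rw [hc]; congr 1; omega
        · subst hb; rw [← hji, hdd]
        · exact hfx x ha (by omega)
    · rintro ⟨i, j, hi1, hi2, hj1, hj2, hf | hf⟩ <;> subst hf
      · refine ⟨piso_gen m i j (j+m) (by omega) hi1 hi2 (by omega) (by omega)
            (by omega) (by omega) (Or.inl rfl), i, i+m, by omega,
            domF_gen m i j (j+m) (by omega) hi1 hi2, ?_⟩
        unfold cdist; push_cast; omega
      · refine ⟨piso_gen m i (j+m) j (by omega) hi1 hi2 (by omega) (by omega)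
            (by omega) (by omega) (Or.inr rfl), i, i+m, by omega,
            domF_gen m i (j+m) j (by omega) hi1 hi2, ?_⟩
        unfold cdist; push_cast; omega
  refine ⟨hset, ?_⟩
  rw [hset]
  have hT : {f : ℕ → Option ℕ | ∃ i j, 1 ≤ i ∧ i ≤ m ∧ 1 ≤ j ∧ j ≤ m ∧
        (f = pmap2 i (i + m) j (j + m) ∨ f = pmap2 i (i + m) (j + m) j)} =
      ↑(((Finset.Icc 1 m ×ˢ Finset.Icc 1 m) ×ˢ (Finset.univ : Finset Bool)).image (fenc m)) := by
    ext f
    simp only [Set.mem_setOf_eq, Finset.coe_image, Set.mem_image, Finset.mem_coe,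
      Finset.mem_product, Finset.mem_Icc, Finset.mem_univ, and_true]
    constructor
    · rintro ⟨i, j, h1, h2, h3, h4, hf | hf⟩
      · exact ⟨((i,j),true), ⟨⟨h1,h2⟩,⟨h3,h4⟩⟩, hf.symm⟩
      · exact ⟨((i,j),false), ⟨⟨h1,h2⟩,⟨h3,h4⟩⟩, hf.symm⟩
    · rintro ⟨⟨⟨i,j⟩,b⟩, ⟨⟨h1,h2⟩,⟨h3,h4⟩⟩, hf⟩
      cases b
      · exact ⟨i, j, h1, h2, h3, h4, Or.inr hf.symm⟩
      · exact ⟨i, j, h1, h2, h3, h4, Or.inl hf.symm⟩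
  rw [hT, Set.ncard_coe_finset]
  rw [Finset.card_image_of_injOn]
  · rw [Finset.card_product, Finset.card_product, Nat.card_Icc, Finset.card_univ]
    simp only [Fintype.card_bool]
    have : m + 1 - 1 = m := by omega
    rw [this]
    ring
  · rintro ⟨⟨i,j⟩,b⟩ hp ⟨⟨i',j'⟩,b'⟩ hp' heq
    simp only [Finset.mem_coe, Finset.mem_product, Finset.mem_Icc, Finset.mem_univ,
      and_true] at hp hp'
    obtain ⟨⟨h1,h2⟩,h3,h4⟩ := hp
    obtain ⟨⟨h1',h2'⟩,h3',h4'⟩ := hp'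
    cases b <;> cases b'
    · rw [fenc_false, fenc_false] at heq
      obtain ⟨e1, e2, e3⟩ := pmap2_ext (by omega : 1 ≤ m) h1 h2 h1' h2' heq
      obtain rfl : i = i' := e1
      obtain rfl : j = j' := by omega
      rfl
    · rw [fenc_false, fenc_true] at heq
      obtain ⟨e1, e2, e3⟩ := pmap2_ext (by omega : 1 ≤ m) h1 h2 h1' h2' heq
      exact absurd e2 (by omega)
    · rw [fenc_true, fenc_false] at heq
      obtain ⟨e1, e2, e3⟩ := pmap2_ext (by omega : 1 ≤ m) h1 h2 h1' h2' heq
      exact absurd e2 (by omega)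
    · rw [fenc_true, fenc_true] at heq
      obtain ⟨e1, e2, e3⟩ := pmap2_ext (by omega : 1 ≤ m) h1 h2 h1' h2' heq
      obtain rfl : i = i' := e1
      obtain rfl : j = j' := by omega
      rfl
end

section
/- For n ≥ 3, the monoid DPC_n of all partial isometries of the cycle graph C_n is generated by the three elements g, h, e_n, where g is the n-cycle i ↦ i+1 (mod n), h is the reversal i ↦ n-i+1, and e_n is the identity map restricted to {1,...,n-1}. -/
namespace Aux14

def zdel (n : ℕ) (a : ZMod n) : ℕ := min a.val (n - a.val)

lemma zdel_neg (n : ℕ) (hn : 3 ≤ n) (a : ZMod n) : zdel n (-a) = zdel n a := by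
  haveI : NeZero n := ⟨by omega⟩
  by_cases h : a = 0
  · subst h; simp
  · haveI : NeZero a := ⟨h⟩
    have hv := ZMod.val_neg_of_ne_zero a
    have hlt : a.val < n := ZMod.val_lt a
    have h0 : a.val ≠ 0 := fun hh => h ((ZMod.val_eq_zero a).1 hh)
    unfold zdel
    rw [hv]
    omega

lemma coor_inj (n : ℕ) (hn : 3 ≤ n) {x y : ℕ} (hx : x ∈ Finset.Icc 1 n)
    (hy : y ∈ Finset.Icc 1 n) (h : (x : ZMod n) = y) : x = y := by
  haveI : NeZero n := ⟨by omega⟩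
  rw [Finset.mem_Icc] at hx hy
  have h2 : x % n = y % n := (ZMod.natCast_eq_natCast_iff x y n).1 h
  have hxl : x < n ∨ x = n := by omega
  have hyl : y < n ∨ y = n := by omega
  rcases hxl with h' | h' <;> rcases hyl with h'' | h''
  · rwa [Nat.mod_eq_of_lt h', Nat.mod_eq_of_lt h''] at h2
  · subst h''; rw [Nat.mod_eq_of_lt h', Nat.mod_self] at h2; omega
  · subst h'; rw [Nat.mod_self, Nat.mod_eq_of_lt h''] at h2; omega
  · omega

lemma cdist_comm (n x y : ℕ) : cdist n x y = cdist n y x := by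
  unfold cdist
  have : ((x:ℤ) - y).natAbs = ((y:ℤ) - x).natAbs := by omega
  rw [this]

lemma cdist_eq_of_le (n x y : ℕ) (hn : 3 ≤ n) (hy1 : 1 ≤ y) (hyx : y ≤ x) (hxn : x ≤ n) :
    cdist n x y = zdel n ((x : ZMod n) - y) := by
  haveI : NeZero n := ⟨by omega⟩
  have h1 : ((x:ℤ) - y).natAbs = x - y := by omega
  have h2 : ((x:ZMod n) - y) = ((x - y : ℕ) : ZMod n) := by
    rw [Nat.cast_sub hyx]
  have h3 : ((x - y : ℕ) : ZMod n).val = x - y := ZMod.val_cast_of_lt (by omega)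
  unfold cdist zdel
  rw [h1, h2, h3]

lemma cdist_eq (n : ℕ) (hn : 3 ≤ n) {x y : ℕ} (hx : x ∈ Finset.Icc 1 n)
    (hy : y ∈ Finset.Icc 1 n) : cdist n x y = zdel n ((x : ZMod n) - y) := by
  rw [Finset.mem_Icc] at hx hy
  rcases le_total y x with h | h
  · exact cdist_eq_of_le n x y hn hy.1 h hx.2
  · rw [cdist_comm, cdist_eq_of_le n y x hn hx.1 h hy.2, ← zdel_neg n hn, neg_sub]

lemma zdel_rigid (n : ℕ) (hn : 3 ≤ n) (a b : ZMod n) (h : zdel n a = zdel n b) :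
    b = a ∨ b = -a := by
  haveI : NeZero n := ⟨by omega⟩
  have ha : a.val < n := ZMod.val_lt a
  have hb : b.val < n := ZMod.val_lt b
  have hv : a.val = b.val ∨ a.val + b.val = n := by
    unfold zdel at h; omega
  rcases hv with hv | hv
  · left; exact (ZMod.val_injective _ hv).symm
  · by_cases h0 : a = 0
    · exfalso; rw [h0, ZMod.val_zero] at hv; omega
    · right
      haveI : NeZero a := ⟨h0⟩
      have hneg := ZMod.val_neg_of_ne_zero a
      exact ZMod.val_injective _ (by omega : b.val = (-a).val)

lemma gfun_mem (n : ℕ) (hn : 3 ≤ n) {x : ℕ} (hx : x ∈ Finset.Icc 1 n) :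
    gfun n x ∈ Finset.Icc 1 n := by
  rw [Finset.mem_Icc] at *; unfold gfun; split <;> omega

lemma gfun_coor (n : ℕ) (hn : 3 ≤ n) {x : ℕ} (hx : x ∈ Finset.Icc 1 n) :
    ((gfun n x : ℕ) : ZMod n) = (x : ZMod n) + 1 := by
  haveI : NeZero n := ⟨by omega⟩
  rw [Finset.mem_Icc] at hx
  unfold gfun
  split
  · push_cast; ring
  · have hxn : x = n := by omega
    subst hxn
    simp

lemma hfun_mem (n : ℕ) (hn : 3 ≤ n) {x : ℕ} (hx : x ∈ Finset.Icc 1 n) :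
    hfun n x ∈ Finset.Icc 1 n := by
  rw [Finset.mem_Icc] at *; unfold hfun; omega

lemma hfun_coor (n : ℕ) (hn : 3 ≤ n) {x : ℕ} (hx : x ∈ Finset.Icc 1 n) :
    ((hfun n x : ℕ) : ZMod n) = 1 - (x : ZMod n) := by
  haveI : NeZero n := ⟨by omega⟩
  rw [Finset.mem_Icc] at hx
  unfold hfun
  rw [Nat.cast_add, Nat.cast_sub hx.2, Nat.cast_one, ZMod.natCast_self]
  ring

lemma iter_mem (n : ℕ) (hn : 3 ≤ n) (k : ℕ) {x : ℕ} (hx : x ∈ Finset.Icc 1 n) :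
    (gfun n)^[k] x ∈ Finset.Icc 1 n := by
  induction k with
  | zero => rw [Function.iterate_zero_apply]; exact hx
  | succ k ih => rw [Function.iterate_succ_apply']; exact gfun_mem n hn ih

lemma iter_coor (n : ℕ) (hn : 3 ≤ n) (k : ℕ) {x : ℕ} (hx : x ∈ Finset.Icc 1 n) :
    (((gfun n)^[k] x : ℕ) : ZMod n) = (x : ZMod n) + k := by
  induction k with
  | zero => simp
  | succ k ih =>
    rw [Function.iterate_succ_apply', gfun_coor n hn (iter_mem n hn k hx), ih]
    push_cast; ring

def totm (n : ℕ) (σ : ℕ → ℕ) : ℕ → Option ℕ :=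
  fun i => if i ∈ Finset.Icc 1 n then some (σ i) else none

def SubIcc (n : ℕ) (q : ℕ → Option ℕ) : Prop := ∀ x, x ∉ Finset.Icc 1 n → q x = none

lemma subIcc_totm (n : ℕ) (σ : ℕ → ℕ) : SubIcc n (totm n σ) := by
  intro x hx; simp [totm, hx]

lemma foldr_replicate_g (n : ℕ) (hn : 3 ≤ n) (k : ℕ) :
    (List.replicate k (gmap n)).foldr pcomp (pid n) = totm n ((gfun n)^[k]) := by
  induction k with
  | zero => funext x; simp [totm, pid]
  | succ k ih =>
    rw [List.replicate_succ, List.foldr_cons, ih]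
    funext x
    simp only [pcomp, gmap, totm]
    by_cases hx : x ∈ Finset.Icc 1 n
    · rw [if_pos hx, Option.bind_some, totm, if_pos (gfun_mem n hn hx),
        Function.iterate_succ_apply, if_pos hx]
    · rw [if_neg hx, if_neg hx, Option.bind_none]

lemma foldr_hword (n : ℕ) (hn : 3 ≤ n) (k : ℕ) :
    ((hmap n :: List.replicate k (gmap n)).foldr pcomp (pid n))
      = totm n (fun i => (gfun n)^[k] (hfun n i)) := by
  rw [List.foldr_cons, foldr_replicate_g n hn k]
  funext x
  simp only [pcomp, hmap, totm]
  by_cases hx : x ∈ Finset.Icc 1 n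
  · rw [if_pos hx, Option.bind_some, totm, if_pos (hfun_mem n hn hx), if_pos hx]
  · rw [if_neg hx, if_neg hx, Option.bind_none]

lemma foldr_pcomp_eq (n : ℕ) (l : List (ℕ → Option ℕ)) (q : ℕ → Option ℕ)
    (hq : SubIcc n q) : l.foldr pcomp q = pcomp (l.foldr pcomp (pid n)) q := by
  induction l with
  | nil =>
    funext x
    simp only [List.foldr_nil, pcomp, pid]
    by_cases hx : x ∈ Finset.Icc 1 n
    · rw [if_pos hx, Option.bind_some]
    · rw [if_neg hx, Option.bind_none, hq x hx]
  | cons p l ih =>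
    rw [List.foldr_cons, List.foldr_cons, ih]
    funext x
    simp only [pcomp, Option.bind_assoc]
    rfl

lemma foldr_append_eq (n : ℕ) (l₁ l₂ : List (ℕ → Option ℕ))
    (h : SubIcc n (l₂.foldr pcomp (pid n))) :
    (l₁ ++ l₂).foldr pcomp (pid n)
      = pcomp (l₁.foldr pcomp (pid n)) (l₂.foldr pcomp (pid n)) := by
  rw [List.foldr_append, foldr_pcomp_eq n l₁ _ h]

def eword (n j : ℕ) : List (ℕ → Option ℕ) :=
  List.replicate (n - j) (gmap n) ++ emap n n :: List.replicate j (gmap n)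

lemma eword_mem (n j : ℕ) : ∀ p ∈ eword n j, p = gmap n ∨ p = hmap n ∨ p = emap n n := by
  intro p hp
  rcases List.mem_append.1 hp with h | h
  · left; exact (List.mem_replicate.1 h).2
  · rcases List.mem_cons.1 h with h | h
    · right; right; exact h
    · left; exact (List.mem_replicate.1 h).2

lemma foldr_eword (n : ℕ) (hn : 3 ≤ n) (j : ℕ) (hj : j ∈ Finset.Icc 1 n) :
    (eword n j).foldr pcomp (pid n) = emap n j := by
  haveI : NeZero n := ⟨by omega⟩
  have hjn : j ≤ n := (Finset.mem_Icc.1 hj).2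
  have hsub : SubIcc n ((emap n n :: List.replicate j (gmap n)).foldr pcomp (pid n)) := by
    intro x hx
    rw [List.foldr_cons]
    have he : emap n n x = none := by
      unfold emap; rw [if_neg (fun h => hx h.1)]
    simp [pcomp, he]
  have h2 : (emap n n :: List.replicate j (gmap n)).foldr pcomp (pid n)
      = pcomp (emap n n) (totm n ((gfun n)^[j])) := by
    rw [List.foldr_cons, foldr_replicate_g n hn j]
  unfold eword
  rw [foldr_append_eq n _ _ hsub, h2, foldr_replicate_g n hn (n - j)]
  funext x
  by_cases hx : x ∈ Finset.Icc 1 n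
  · have hA : (gfun n)^[n - j] x ∈ Finset.Icc 1 n := iter_mem n hn _ hx
    have hAc : (((gfun n)^[n - j] x : ℕ) : ZMod n) = (x : ZMod n) - j := by
      rw [iter_coor n hn _ hx, Nat.cast_sub hjn]
      rw [ZMod.natCast_self]; ring
    by_cases hxj : x = j
    · subst hxj
      have hAn : (gfun n)^[n - x] x = n := by
        apply coor_inj n hn hA (by rw [Finset.mem_Icc]; omega)
        rw [hAc, ZMod.natCast_self]; ring
      simp only [pcomp, totm, emap, if_pos hx, Option.bind_some, hAn]
      rw [if_neg (by simp : ¬(n ∈ Finset.Icc 1 n ∧ n ≠ n)), Option.bind_none,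
        if_neg (by simp : ¬(x ∈ Finset.Icc 1 n ∧ x ≠ x))]
    · have hAn : (gfun n)^[n - j] x ≠ n := by
        intro hh
        apply hxj
        apply coor_inj n hn hx hj
        have : (((gfun n)^[n - j] x : ℕ) : ZMod n) = ((n : ℕ) : ZMod n) := by rw [hh]
        rw [hAc, ZMod.natCast_self] at this
        exact sub_eq_zero.1 this
      have hB : (gfun n)^[j] ((gfun n)^[n - j] x) = x := by
        apply coor_inj n hn (iter_mem n hn _ hA) hx
        rw [iter_coor n hn _ hA, hAc]; ring
      simp only [pcomp, totm, emap, if_pos hx, Option.bind_some]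
      rw [if_pos (⟨hA, hAn⟩ : (gfun n)^[n-j] x ∈ Finset.Icc 1 n ∧ (gfun n)^[n-j] x ≠ n)]
      rw [Option.bind_some]
      rw [totm, if_pos hA]
      rw [hB]
      rw [if_pos (⟨hx, hxj⟩ : x ∈ Finset.Icc 1 n ∧ x ≠ j)]
  · simp only [pcomp, totm, emap, if_neg hx, Option.bind_none]
    rw [if_neg (fun h : x ∈ Finset.Icc 1 n ∧ x ≠ j => hx h.1)]

lemma foldr_emaps (n : ℕ) (L : List ℕ) :
    ((L.map (emap n)).foldr pcomp (pid n)) =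
      fun x => if x ∈ Finset.Icc 1 n ∧ x ∉ L then some x else none := by
  induction L with
  | nil => funext x; simp [pid]
  | cons j L ih =>
    funext x
    rw [List.map_cons, List.foldr_cons, ih]
    simp only [pcomp, emap]
    by_cases hx : x ∈ Finset.Icc 1 n
    · by_cases hj : x = j
      · rw [if_neg (fun h => h.2 hj), Option.bind_none,
          if_neg (fun h => h.2 (List.mem_cons.2 (Or.inl hj)))]
      · rw [if_pos ⟨hx, hj⟩, Option.bind_some]
        by_cases hL : x ∈ L
        · rw [if_neg (fun h => h.2 hL), if_neg (fun h => h.2 (List.mem_cons.2 (Or.inr hL)))]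
        · rw [if_pos ⟨hx, hL⟩,
            if_pos ⟨hx, fun h => (List.mem_cons.1 h).elim hj hL⟩]
    · rw [if_neg (fun h => hx h.1), Option.bind_none, if_neg (fun h => hx h.1)]

def ewords (n : ℕ) : List ℕ → List (ℕ → Option ℕ)
  | [] => []
  | j :: L => eword n j ++ ewords n L

lemma ewords_mem (n : ℕ) (L : List ℕ) :
    ∀ p ∈ ewords n L, p = gmap n ∨ p = hmap n ∨ p = emap n n := by
  induction L with
  | nil => intro p hp; simp [ewords] at hp
  | cons j L ih =>
    intro p hp
    rw [show ewords n (j :: L) = eword n j ++ ewords n L from rfl] at hp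
    rcases List.mem_append.1 hp with h | h
    · exact eword_mem n j p h
    · exact ih p h

lemma foldr_ewords (n : ℕ) (hn : 3 ≤ n) (L : List ℕ) :
    (∀ j ∈ L, j ∈ Finset.Icc 1 n) →
    (ewords n L).foldr pcomp (pid n) = (L.map (emap n)).foldr pcomp (pid n) := by
  induction L with
  | nil => intro _; rfl
  | cons j L ih =>
    intro hL
    have hL' : ∀ i ∈ L, i ∈ Finset.Icc 1 n := fun i hi => hL i (List.mem_cons.2 (Or.inr hi))
    have hsub : SubIcc n ((ewords n L).foldr pcomp (pid n)) := by
      rw [ih hL', foldr_emaps]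
      intro x hx
      exact if_neg (fun h => hx h.1)
    rw [show ewords n (j :: L) = eword n j ++ ewords n L from rfl,
      foldr_append_eq n _ _ hsub, ih hL', foldr_eword n hn j (hL j (List.mem_cons_self)),
      List.map_cons, List.foldr_cons]

lemma ite_some {c : Prop} [Decidable c] {a y : ℕ} (h : (if c then some a else none) = some y) :
    c ∧ y = a := by
  split at h
  · exact ⟨‹_›, (Option.some_inj.1 h).symm⟩
  · cases h

lemma PIso_pcomp (n : ℕ) {p q : ℕ → Option ℕ} (hp : PIso n p) (hq : PIso n q) :
    PIso n (pcomp p q) := by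
  obtain ⟨p1, p2, p3⟩ := hp
  obtain ⟨q1, q2, q3⟩ := hq
  refine ⟨?_, ?_, ?_⟩
  · intro x y hxy
    rcases Option.bind_eq_some_iff.1 hxy with ⟨m, hm, hmy⟩
    exact ⟨(p1 x m hm).1, (q1 m y hmy).2⟩
  · intro x y z hx hy
    rcases Option.bind_eq_some_iff.1 hx with ⟨m1, hm1, hm1z⟩
    rcases Option.bind_eq_some_iff.1 hy with ⟨m2, hm2, hm2z⟩
    have hm12 := q2 m1 m2 z hm1z hm2z
    subst hm12
    exact p2 x y m1 hm1 hm2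
  · intro x y x' y' hx hy
    rcases Option.bind_eq_some_iff.1 hx with ⟨m1, hm1, hm1z⟩
    rcases Option.bind_eq_some_iff.1 hy with ⟨m2, hm2, hm2z⟩
    rw [q3 m1 m2 x' y' hm1z hm2z, p3 x y m1 m2 hm1 hm2]

lemma PIso_pid (n : ℕ) : PIso n (pid n) := by
  refine ⟨fun x y h => ?_, fun x y z hx hy => ?_, fun x y x' y' hx hy => ?_⟩
  · obtain ⟨hc, hy⟩ := ite_some h
    exact ⟨hc, hy ▸ hc⟩
  · obtain ⟨_, h1⟩ := ite_some hx
    obtain ⟨_, h2⟩ := ite_some hy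
    omega
  · obtain ⟨_, h1⟩ := ite_some hx
    obtain ⟨_, h2⟩ := ite_some hy
    subst h1; subst h2; rfl

lemma PIso_gmap (n : ℕ) (hn : 3 ≤ n) : PIso n (gmap n) := by
  haveI : NeZero n := ⟨by omega⟩
  refine ⟨fun x y h => ?_, fun x y z hx hy => ?_, fun x y x' y' hx hy => ?_⟩
  · obtain ⟨hc, hy⟩ := ite_some h
    exact ⟨hc, hy ▸ gfun_mem n hn hc⟩
  · obtain ⟨hcx, h1⟩ := ite_some hx
    obtain ⟨hcy, h2⟩ := ite_some hy
    apply coor_inj n hn hcx hcy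
    have : ((gfun n x : ℕ) : ZMod n) = ((gfun n y : ℕ) : ZMod n) := by rw [← h1, ← h2]
    rw [gfun_coor n hn hcx, gfun_coor n hn hcy] at this
    exact add_right_cancel this
  · obtain ⟨hcx, h1⟩ := ite_some hx
    obtain ⟨hcy, h2⟩ := ite_some hy
    subst h1; subst h2
    rw [cdist_eq n hn (gfun_mem n hn hcx) (gfun_mem n hn hcy), cdist_eq n hn hcx hcy,
      gfun_coor n hn hcx, gfun_coor n hn hcy]
    congr 1
    ring

lemma PIso_hmap (n : ℕ) (hn : 3 ≤ n) : PIso n (hmap n) := by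
  haveI : NeZero n := ⟨by omega⟩
  refine ⟨fun x y h => ?_, fun x y z hx hy => ?_, fun x y x' y' hx hy => ?_⟩
  · obtain ⟨hc, hy⟩ := ite_some h
    exact ⟨hc, hy ▸ hfun_mem n hn hc⟩
  · obtain ⟨hcx, h1⟩ := ite_some hx
    obtain ⟨hcy, h2⟩ := ite_some hy
    have : ((hfun n x : ℕ) : ZMod n) = ((hfun n y : ℕ) : ZMod n) := by rw [← h1, ← h2]
    rw [hfun_coor n hn hcx, hfun_coor n hn hcy] at this
    exact coor_inj n hn hcx hcy (by linear_combination -this)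
  · obtain ⟨hcx, h1⟩ := ite_some hx
    obtain ⟨hcy, h2⟩ := ite_some hy
    subst h1; subst h2
    rw [cdist_eq n hn (hfun_mem n hn hcx) (hfun_mem n hn hcy), cdist_eq n hn hcx hcy,
      hfun_coor n hn hcx, hfun_coor n hn hcy,
      show (1 : ZMod n) - x - (1 - y) = -((x : ZMod n) - y) by ring, zdel_neg n hn]

lemma PIso_emap (n j : ℕ) : PIso n (emap n j) := by
  refine ⟨fun x y h => ?_, fun x y z hx hy => ?_, fun x y x' y' hx hy => ?_⟩
  · obtain ⟨hc, hy⟩ := ite_some h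
    exact ⟨hc.1, hy ▸ hc.1⟩
  · obtain ⟨_, h1⟩ := ite_some hx
    obtain ⟨_, h2⟩ := ite_some hy
    omega
  · obtain ⟨_, h1⟩ := ite_some hx
    obtain ⟨_, h2⟩ := ite_some hy
    subst h1; subst h2; rfl

lemma exists_sigma (n : ℕ) (hn : 3 ≤ n) (f : ℕ → Option ℕ) (hf : PIso n f) :
    ∃ l : List (ℕ → Option ℕ), (∀ p ∈ l, p = gmap n ∨ p = hmap n) ∧
      ∃ σ : ℕ → ℕ, l.foldr pcomp (pid n) = totm n σ ∧
        (∀ x y, f x = some y → σ x = y) := by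
  haveI : NeZero n := ⟨by omega⟩
  obtain ⟨h1, h2, h3⟩ := hf
  have key : ∀ x y x' y', f x = some x' → f y = some y' →
      ((x' : ZMod n) - y') = ((x : ZMod n) - y) ∨
      ((x' : ZMod n) - y') = -((x : ZMod n) - y) := by
    intro x y x' y' hx hy
    have hmx := h1 x x' hx
    have hmy := h1 y y' hy
    have hd := h3 x y x' y' hx hy
    rw [cdist_eq n hn hmx.2 hmy.2, cdist_eq n hn hmx.1 hmy.1] at hd
    rcases zdel_rigid n hn _ _ hd with h | h
    · exact Or.inl h.symm
    · exact Or.inr (by linear_combination h)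
  by_cases hem : ∀ x, f x = none
  · refine ⟨[], by simp, fun i => i, rfl, ?_⟩
    intro x y hxy; rw [hem x] at hxy; cases hxy
  · push_neg at hem
    obtain ⟨x0, hx0⟩ := hem
    obtain ⟨x0', hx0'⟩ := Option.ne_none_iff_exists'.1 hx0
    have hx0m := h1 x0 x0' hx0'
    by_cases hrot : ∀ z z', f z = some z' → (z' : ZMod n) = z + ((x0' : ZMod n) - x0)
    · set u : ZMod n := (x0' : ZMod n) - x0 with hu
      refine ⟨List.replicate u.val (gmap n), ?_, (gfun n)^[u.val],
        foldr_replicate_g n hn u.val, ?_⟩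
      · intro p hp; exact Or.inl (List.mem_replicate.1 hp).2
      · intro z z' hz
        have hzm := h1 z z' hz
        apply coor_inj n hn (iter_mem n hn _ hzm.1) hzm.2
        rw [iter_coor n hn _ hzm.1, ZMod.natCast_val, ZMod.cast_id, hrot z z' hz]
    · push_neg at hrot
      obtain ⟨z0, z0', hz0, hz0ne⟩ := hrot
      have hz0m := h1 z0 z0' hz0
      have hδ : (z0' : ZMod n) - x0' = -((z0 : ZMod n) - x0) := by
        rcases key z0 x0 z0' x0' hz0 hx0' with h | h
        · exfalso; apply hz0ne; linear_combination h
        · exact h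
      have hδne : ((z0 : ZMod n) - x0) ≠ -((z0 : ZMod n) - x0) := by
        intro hh
        exact hz0ne (by linear_combination hδ - hh)
      set μ : ZMod n := (x0' : ZMod n) + x0 with hμ
      set k : ℕ := (μ - 1).val with hk
      have hrefl : ∀ z z', f z = some z' → (z' : ZMod n) = μ - z := by
        intro z z' hz
        have ha := key z x0 z' x0' hz hx0'
        have hb := key z z0 z' z0' hz hz0
        have hgoal : (z' : ZMod n) - x0' = -((z : ZMod n) - x0) := by
          rcases ha with ha | ha
          · rcases hb with hb | hb
            · exact absurd (by linear_combination hδ - ha + hb) hδne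
            · linear_combination hb + hδ
          · exact ha
        linear_combination hgoal
      refine ⟨hmap n :: List.replicate k (gmap n), ?_,
        fun i => (gfun n)^[k] (hfun n i), foldr_hword n hn k, ?_⟩
      · intro p hp
        rcases List.mem_cons.1 hp with h | h
        · exact Or.inr h
        · exact Or.inl (List.mem_replicate.1 h).2
      · intro z z' hz
        have hzm := h1 z z' hz
        apply coor_inj n hn (iter_mem n hn _ (hfun_mem n hn hzm.1)) hzm.2
        rw [iter_coor n hn _ (hfun_mem n hn hzm.1), hfun_coor n hn hzm.1,
          ZMod.natCast_val, ZMod.cast_id, hrefl z z' hz]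
        ring

lemma PIso_foldr (n : ℕ) (hn : 3 ≤ n) (l : List (ℕ → Option ℕ)) :
    (∀ p ∈ l, p = gmap n ∨ p = hmap n ∨ p = emap n n) →
    PIso n (l.foldr pcomp (pid n)) := by
  induction l with
  | nil => intro _; exact PIso_pid n
  | cons p l ih =>
    intro hl
    rw [List.foldr_cons]
    have hp : PIso n p := by
      rcases hl p (List.mem_cons_self) with h | h | h
      · exact h ▸ PIso_gmap n hn
      · exact h ▸ PIso_hmap n hn
      · exact h ▸ PIso_emap n n
    exact PIso_pcomp n hp (ih (fun q hq => hl q (List.mem_cons.2 (Or.inr hq))))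

end Aux14

open Aux14 in
/-- `DPC_n` is generated (as a monoid of partial maps under left-to-right
composition, with identity `id_{1..n}`) by `g`, `h` and `e_n`. -/
theorem stmt_14 (n : ℕ) (hn : 3 ≤ n) (f : ℕ → Option ℕ) :
    PIso n f ↔ ∃ l : List (ℕ → Option ℕ),
      (∀ p ∈ l, p = gmap n ∨ p = hmap n ∨ p = emap n n) ∧
      l.foldr pcomp (pid n) = f := by
  haveI : NeZero n := ⟨by omega⟩
  constructor
  · intro hf
    obtain ⟨lσ, hlσ, σ, hfold, hext⟩ := exists_sigma n hn f hf
    obtain ⟨h1, h2, h3⟩ := hf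
    set L : List ℕ := ((Finset.Icc 1 n) \ domF n f).toList with hL
    have hLmem : ∀ j ∈ L, j ∈ Finset.Icc 1 n := by
      intro j hj
      rw [hL, Finset.mem_toList, Finset.mem_sdiff] at hj
      exact hj.1
    refine ⟨ewords n L ++ lσ, ?_, ?_⟩
    · intro p hp
      rcases List.mem_append.1 hp with h | h
      · exact ewords_mem n L p h
      · rcases hlσ p h with h' | h'
        · exact Or.inl h'
        · exact Or.inr (Or.inl h')
    · have hsub : SubIcc n (lσ.foldr pcomp (pid n)) := by
        rw [hfold]; exact subIcc_totm n σ
      rw [foldr_append_eq n _ _ hsub, foldr_ewords n hn L hLmem, foldr_emaps, hfold]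
      funext x
      simp only [pcomp, totm]
      by_cases hx : x ∈ Finset.Icc 1 n
      · by_cases hdom : (f x).isSome
        · obtain ⟨y, hy⟩ := Option.isSome_iff_exists.1 hdom
          have hxL : x ∉ L := by
            rw [hL, Finset.mem_toList, Finset.mem_sdiff]
            intro hc
            exact hc.2 (Finset.mem_filter.2 ⟨hx, hdom⟩)
          rw [if_pos ⟨hx, hxL⟩, Option.bind_some, totm, if_pos hx, hext x y hy, hy]
        · have hxL : x ∈ L := by
            rw [hL, Finset.mem_toList, Finset.mem_sdiff]
            exact ⟨hx, fun hc => hdom (Finset.mem_filter.1 hc).2⟩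
          rw [if_neg (fun h => h.2 hxL), Option.bind_none]
          exact (Option.not_isSome_iff_eq_none.1 hdom).symm
      · rw [if_neg (fun h => hx h.1), Option.bind_none]
        cases hfx : f x with
        | none => rfl
        | some y => exact absurd (h1 x y hfx).1 hx
  · rintro ⟨l, hl, rfl⟩
    exact PIso_foldr n hn l hl
end

section
/- For n ≥ 3 and 1 ≤ j ≤ n, the identity e_j = h·g^{j-1}·e_n·h·g^{j-1} holds in DPC_n, where e_i denotes the partial identity with domain {1,...,n} \ {i}, g is the n-cycle, and h the reversal. -/
lemma gpow_apply (n : ℕ) (hn : 1 ≤ n) (k : ℕ) : ∀ i, 1 ≤ i → i ≤ n →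
    ppow n (gmap n) k i = some ((i - 1 + k) % n + 1) := by
  induction k with
  | zero =>
    intro i h1 h2
    have : (i - 1 + 0) % n = i - 1 := Nat.mod_eq_of_lt (by omega)
    simp only [ppow, pid, Finset.mem_Icc, this]
    rw [if_pos ⟨h1, h2⟩]
    congr 1; omega
  | succ k ih =>
    intro i h1 h2
    show (gmap n i).bind (ppow n (gmap n) k) = _
    unfold gmap
    rw [if_pos (Finset.mem_Icc.mpr ⟨h1, h2⟩)]
    unfold gfun
    by_cases hi : i < n
    · rw [if_pos hi]
      show ppow n (gmap n) k (i + 1) = _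
      rw [ih (i + 1) (by omega) (by omega)]
      have he : i + 1 - 1 + k = i - 1 + (k + 1) := by omega
      rw [he]
    · rw [if_neg hi]
      show ppow n (gmap n) k 1 = _
      rw [ih 1 le_rfl hn]
      have h3 : (i - 1 + (k + 1)) % n = k % n := by
        rw [Nat.mod_eq_sub_mod (by omega)]
        congr 1; omega
      rw [h3]
      have h4 : 1 - 1 + k = k := by omega
      rw [h4]

lemma mod_two_cases {n a : ℕ} (h : a < 2 * n) :
    a % n = if a < n then a else a - n := by
  split
  · exact Nat.mod_eq_of_lt ‹_›
  · rw [Nat.mod_eq_sub_mod (by omega), Nat.mod_eq_of_lt (by omega)]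

/-- `e_j = h·g^{j-1}·e_n·h·g^{j-1}` in `DPC_n` (composition left-to-right:
`h` applied first). -/
theorem stmt_15 (n : ℕ) (hn : 3 ≤ n) (j : ℕ) (hj : j ∈ Finset.Icc 1 n) :
    emap n j = pcomp (hmap n) (pcomp (ppow n (gmap n) (j - 1))
      (pcomp (emap n n) (pcomp (hmap n) (ppow n (gmap n) (j - 1))))) := by
  have emap_eq : ∀ m k i : ℕ, emap m k i =
      if i ∈ Finset.Icc 1 m ∧ i ≠ k then some i else none := fun _ _ _ => rfl
  rw [Finset.mem_Icc] at hj
  obtain ⟨hj1, hj2⟩ := hj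
  funext x
  by_cases hx : 1 ≤ x ∧ x ≤ n
  · obtain ⟨hx1, hx2⟩ := hx
    show _ = ((hmap n x).bind _ : Option ℕ)
    unfold hmap
    rw [if_pos (Finset.mem_Icc.mpr ⟨hx1, hx2⟩)]
    show _ = (ppow n (gmap n) (j-1) (hfun n x)).bind _
    unfold hfun
    rw [gpow_apply n (by omega) (j-1) (n - x + 1) (by omega) (by omega)]
    show _ = (emap n n ((n - x + 1 - 1 + (j - 1)) % n + 1)).bind _
    have ha : n - x + 1 - 1 + (j - 1) = n - x + (j - 1) := by omega
    rw [ha]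
    set a := n - x + (j - 1) with hadef
    have ha2 : a < 2 * n := by omega
    have hamod := mod_two_cases ha2
    have hmlt : a % n < n := Nat.mod_lt _ (by omega)
    by_cases hxj : x = j
    · have hyn : a % n + 1 = n := by
        rw [hamod]; split <;> omega
      rw [emap_eq n n (a % n + 1), if_neg (by simp [hyn])]
      rw [emap_eq n j x, if_neg (by rintro ⟨-, h⟩; exact h hxj)]
      rfl
    · have hne : a % n + 1 ≠ n := by
        rw [hamod]; split <;> omega
      rw [emap_eq n n (a % n + 1),
        if_pos ⟨Finset.mem_Icc.mpr ⟨by omega, by omega⟩, hne⟩]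
      show _ = (hmap n (a % n + 1)).bind _
      unfold hmap
      rw [if_pos (Finset.mem_Icc.mpr ⟨by omega, by omega⟩)]
      show _ = ppow n (gmap n) (j-1) (hfun n (a % n + 1))
      unfold hfun
      rw [gpow_apply n (by omega) (j-1) (n - (a % n + 1) + 1) (by omega) (by omega)]
      have key : (n - (a % n + 1) + 1 - 1 + (j - 1)) % n = x - 1 := by
        have hb : n - (a % n + 1) + 1 - 1 + (j - 1) = n - 1 - a % n + (j - 1) := by
          omega
        rw [hb, mod_two_cases (by omega), hamod]
        split <;> split <;> omega
      rw [key]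
      rw [emap_eq n j x, if_pos ⟨Finset.mem_Icc.mpr ⟨hx1, hx2⟩, hxj⟩]
      congr 1
      omega
  · show _ = ((hmap n x).bind _ : Option ℕ)
    rw [emap_eq n j x, if_neg (by simp [Finset.mem_Icc]; omega)]
    unfold hmap
    rw [if_neg (by simp [Finset.mem_Icc]; omega)]
    rfl
end

section
/- For n ≥ 3, two partial isometries α, β of C_n are H-related in DPC_n (equivalently, in the symmetric inverse monoid I_n restricted to DPC_n) if and only if Dom(α) = Dom(β) and Im(α) = Im(β); α and β are L-related iff Im(α) = Im(β), and R-related iff Dom(α) = Dom(β). -/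
open Classical in
/-- Inverse of a partial map (choice-based). -/
noncomputable def pinv (f : ℕ → Option ℕ) : ℕ → Option ℕ :=
  fun y => if h : ∃ x, f x = some y then some h.choose else none

lemma pinv_spec {f : ℕ → Option ℕ} {y x : ℕ} (h : pinv f y = some x) : f x = some y := by
  unfold pinv at h
  split at h
  · next hex => cases h; exact hex.choose_spec
  · exact absurd h (by simp)

lemma pinv_of {f : ℕ → Option ℕ}
    (hinj : ∀ x y z, f x = some z → f y = some z → x = y)
    {x y : ℕ} (h : f x = some y) : pinv f y = some x := by
  unfold pinv
  rw [dif_pos ⟨x, h⟩]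
  exact congrArg some (hinj _ _ _ (⟨x, h⟩ : ∃ x, f x = some y).choose_spec h)

lemma piso_pinv {n : ℕ} {f : ℕ → Option ℕ} (hf : PIso n f) : PIso n (pinv f) := by
  obtain ⟨h1, h2, h3⟩ := hf
  refine ⟨fun x y h => ?_, fun x y z hx hy => ?_, fun x y x' y' hx hy => ?_⟩
  · exact ⟨(h1 _ _ (pinv_spec h)).2, (h1 _ _ (pinv_spec h)).1⟩
  · have hx' := pinv_spec hx
    have hy' := pinv_spec hy
    rw [hx'] at hy'; exact Option.some_injective _ hy'
  · have hx' := pinv_spec hx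
    have hy' := pinv_spec hy
    exact (h3 _ _ _ _ hx' hy').symm

lemma piso_comp {n : ℕ} {f g : ℕ → Option ℕ} (hf : PIso n f) (hg : PIso n g) :
    PIso n (pcomp f g) := by
  obtain ⟨f1, f2, f3⟩ := hf
  obtain ⟨g1, g2, g3⟩ := hg
  refine ⟨fun x y h => ?_, fun x y z hx hy => ?_, fun x y x' y' hx hy => ?_⟩
  · obtain ⟨m, hm1, hm2⟩ := Option.bind_eq_some_iff.mp h
    exact ⟨(f1 _ _ hm1).1, (g1 _ _ hm2).2⟩
  · obtain ⟨m, hm1, hm2⟩ := Option.bind_eq_some_iff.mp hx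
    obtain ⟨m', hm1', hm2'⟩ := Option.bind_eq_some_iff.mp hy
    have heq := g2 _ _ _ hm2 hm2'
    subst heq
    exact f2 _ _ _ hm1 hm1'
  · obtain ⟨m, hm1, hm2⟩ := Option.bind_eq_some_iff.mp hx
    obtain ⟨m', hm1', hm2'⟩ := Option.bind_eq_some_iff.mp hy
    rw [g3 _ _ _ _ hm2 hm2', f3 _ _ _ _ hm1 hm1']

lemma pcomp_assoc (f g h : ℕ → Option ℕ) : pcomp (pcomp f g) h = pcomp f (pcomp g h) := by
  funext x; simp [pcomp, Option.bind_assoc]; rfl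

lemma im_pcomp_subset (c a : ℕ → Option ℕ) : ImS (pcomp c a) ⊆ ImS a := by
  intro y ⟨x, hx⟩
  obtain ⟨m, _, hm2⟩ := Option.bind_eq_some_iff.mp hx
  exact ⟨m, hm2⟩

lemma dom_pcomp_subset (a c : ℕ → Option ℕ) : DomS (pcomp a c) ⊆ DomS a := by
  intro x hx
  simp only [DomS, Set.mem_setOf_eq, pcomp] at *
  cases h : a x with
  | none => rw [h] at hx; simp at hx
  | some m => simp

/-- in `DPC_n`, `α L β` (equal principal left ideals) iff
`Im α = Im β`, `α R β` iff `Dom α = Dom β`, and `α H β` iff both. -/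
theorem stmt_18 (n : ℕ) (hn : 3 ≤ n) (a b : ℕ → Option ℕ)
    (ha : PIso n a) (hb : PIso n b) :
    ({x | ∃ c, PIso n c ∧ pcomp c a = x} = {x | ∃ c, PIso n c ∧ pcomp c b = x} ↔
      ImS a = ImS b) ∧
    ({x | ∃ c, PIso n c ∧ pcomp a c = x} = {x | ∃ c, PIso n c ∧ pcomp b c = x} ↔
      DomS a = DomS b) ∧
    (({x | ∃ c, PIso n c ∧ pcomp c a = x} = {x | ∃ c, PIso n c ∧ pcomp c b = x} ∧
      {x | ∃ c, PIso n c ∧ pcomp a c = x} = {x | ∃ c, PIso n c ∧ pcomp b c = x}) ↔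
      (DomS a = DomS b ∧ ImS a = ImS b)) := by
  obtain ⟨a1, a2, a3⟩ := ha
  obtain ⟨b1, b2, b3⟩ := hb
  have ha' : PIso n a := ⟨a1, a2, a3⟩
  have hb' : PIso n b := ⟨b1, b2, b3⟩
  -- key: if Im f ⊆ Im a then pcomp (pcomp f (pinv a)) a = f
  have keyL : ∀ f : ℕ → Option ℕ, ImS f ⊆ ImS a → pcomp (pcomp f (pinv a)) a = f := by
    intro f hsub
    funext x
    rw [pcomp_assoc]
    show (f x).bind (fun y => (pinv a y).bind a) = f x
    cases h : f x with
    | none => rfl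
    | some y =>
      obtain ⟨x', hx'⟩ := hsub ⟨x, h⟩
      simp only [Option.bind_some]
      rw [pinv_of a2 hx']
      exact hx'
  have keyLb : ∀ f : ℕ → Option ℕ, ImS f ⊆ ImS b → pcomp (pcomp f (pinv b)) b = f := by
    intro f hsub
    funext x
    rw [pcomp_assoc]
    show (f x).bind (fun y => (pinv b y).bind b) = f x
    cases h : f x with
    | none => rfl
    | some y =>
      obtain ⟨x', hx'⟩ := hsub ⟨x, h⟩
      simp only [Option.bind_some]
      rw [pinv_of b2 hx']
      exact hx'
  have keyR : ∀ f : ℕ → Option ℕ, DomS f ⊆ DomS a → pcomp a (pcomp (pinv a) f) = f := by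
    intro f hsub
    funext x
    rw [← pcomp_assoc]
    show ((a x).bind (pinv a)).bind f = f x
    cases h : a x with
    | none =>
      have : x ∉ DomS a := by simp [DomS, h]
      have hx : f x = none := by
        by_contra hc
        exact this (hsub (by simp [DomS, Option.isSome_iff_ne_none, hc]))
      simp [hx]
    | some y =>
      simp only [Option.bind_some]
      rw [pinv_of a2 h]
      rfl
  have keyRb : ∀ f : ℕ → Option ℕ, DomS f ⊆ DomS b → pcomp b (pcomp (pinv b) f) = f := by
    intro f hsub
    funext x
    rw [← pcomp_assoc]
    show ((b x).bind (pinv b)).bind f = f x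
    cases h : b x with
    | none =>
      have : x ∉ DomS b := by simp [DomS, h]
      have hx : f x = none := by
        by_contra hc
        exact this (hsub (by simp [DomS, Option.isSome_iff_ne_none, hc]))
      simp [hx]
    | some y =>
      simp only [Option.bind_some]
      rw [pinv_of b2 h]
      rfl
  have L_iff : {x | ∃ c, PIso n c ∧ pcomp c a = x} = {x | ∃ c, PIso n c ∧ pcomp c b = x} ↔
      ImS a = ImS b := by
    constructor
    · intro hset
      apply Set.Subset.antisymm
      · have ha_mem : a ∈ {x | ∃ c, PIso n c ∧ pcomp c a = x} :=
          ⟨pcomp a (pinv a), piso_comp ha' (piso_pinv ha'), keyL a (le_refl _)⟩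
        rw [hset] at ha_mem
        obtain ⟨c, _, hc⟩ := ha_mem
        rw [← hc]
        exact im_pcomp_subset c b
      · have hb_mem : b ∈ {x | ∃ c, PIso n c ∧ pcomp c b = x} :=
          ⟨pcomp b (pinv b), piso_comp hb' (piso_pinv hb'), keyLb b (le_refl _)⟩
        rw [← hset] at hb_mem
        obtain ⟨c, _, hc⟩ := hb_mem
        rw [← hc]
        exact im_pcomp_subset c a
    · intro him
      ext f
      constructor
      · rintro ⟨c, hc, rfl⟩
        refine ⟨pcomp (pcomp c a) (pinv b), piso_comp (piso_comp hc ha') (piso_pinv hb'), ?_⟩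
        exact keyLb _ (him ▸ im_pcomp_subset c a)
      · rintro ⟨c, hc, rfl⟩
        refine ⟨pcomp (pcomp c b) (pinv a), piso_comp (piso_comp hc hb') (piso_pinv ha'), ?_⟩
        exact keyL _ (him ▸ im_pcomp_subset c b)
  have R_iff : {x | ∃ c, PIso n c ∧ pcomp a c = x} = {x | ∃ c, PIso n c ∧ pcomp b c = x} ↔
      DomS a = DomS b := by
    constructor
    · intro hset
      apply Set.Subset.antisymm
      · have ha_mem : a ∈ {x | ∃ c, PIso n c ∧ pcomp a c = x} :=
          ⟨pcomp (pinv a) a, piso_comp (piso_pinv ha') ha', keyR a (le_refl _)⟩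
        rw [hset] at ha_mem
        obtain ⟨c, _, hc⟩ := ha_mem
        rw [← hc]
        exact dom_pcomp_subset b c
      · have hb_mem : b ∈ {x | ∃ c, PIso n c ∧ pcomp b c = x} :=
          ⟨pcomp (pinv b) b, piso_comp (piso_pinv hb') hb', keyRb b (le_refl _)⟩
        rw [← hset] at hb_mem
        obtain ⟨c, _, hc⟩ := hb_mem
        rw [← hc]
        exact dom_pcomp_subset a c
    · intro hdom
      ext f
      constructor
      · rintro ⟨c, hc, rfl⟩
        refine ⟨pcomp (pinv b) (pcomp a c), piso_comp (piso_pinv hb') (piso_comp ha' hc), ?_⟩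
        exact keyRb _ (hdom ▸ dom_pcomp_subset a c)
      · rintro ⟨c, hc, rfl⟩
        refine ⟨pcomp (pinv a) (pcomp b c), piso_comp (piso_pinv ha') (piso_comp hb' hc), ?_⟩
        exact keyR _ (hdom ▸ dom_pcomp_subset b c)
  exact ⟨L_iff, R_iff, by rw [L_iff, R_iff]; tauto⟩
end
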